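/- arXiv:2102.04536 — 9 statements merged into one kernel-verified Lean document; each statement's English description precedes it below -/
import Mathlib

section
/- Let p be an odd prime and n a positive integer with p^α exactly dividing n, α ≥ 1. Then p^{α+1} exactly divides M_{Z_n}(p + (x-1)), i.e., the product ∏_{j=0}^{n-1} (p - 1 + e^{2πij/n}) is divisible by p^{α+1} but not by p^{α+2}. -/
open Polynomial Complex Finset

noncomputable def Mzn (n : ℕ) (F : Polynomial ℤ) : ℂ :=
  ∏ j ∈ Finset.range n, Polynomial.aeval (Complex.exp (2 * Real.pi * Complex.I * j / n)) F

noncomputable def MQ (n : ℕ) (f g : Polynomial ℤ) : ℂ :=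
  ∏ j ∈ Finset.range (2 * n),
    (Polynomial.aeval (Complex.exp (2 * Real.pi * Complex.I * j / (2 * n))) f *
       Polynomial.aeval (Complex.exp (2 * Real.pi * Complex.I * j / (2 * n)))⁻¹ f -
     Complex.exp (2 * Real.pi * Complex.I * j / (2 * n)) ^ n *
       Polynomial.aeval (Complex.exp (2 * Real.pi * Complex.I * j / (2 * n))) g *
       Polynomial.aeval (Complex.exp (2 * Real.pi * Complex.I * j / (2 * n)))⁻¹ g)

set_option maxRecDepth 4000 in
theorem stmt2 (p : ℕ) (hp : p.Prime) (hodd : Odd p) (n α : ℕ) (hn : 0 < n) (hα : 1 ≤ α)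
    (hdvd : p ^ α ∣ n) (hndvd : ¬ p ^ (α + 1) ∣ n)
    (M : ℤ) (hM : (M : ℂ) = Mzn n (Polynomial.C (p : ℤ) + (Polynomial.X - 1))) :
    (p : ℤ) ^ (α + 1) ∣ M ∧ ¬ (p : ℤ) ^ (α + 2) ∣ M := by
  have hp2 : 2 ≤ p := hp.two_le
  -- step 1: identify M as an integer
  set ζ : ℂ := Complex.exp (2 * Real.pi * Complex.I / n) with hζdef
  have hζ : IsPrimitiveRoot ζ n := Complex.isPrimitiveRoot_exp n hn.ne'
  have hpoly : (X : ℂ[X]) ^ n - Polynomial.C 1 =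
      ∏ i ∈ Finset.range n, (X - Polynomial.C (ζ ^ i * 1)) :=
    X_pow_sub_C_eq_prod hζ hn (one_pow n)
  have hprod : ((1 : ℂ) - p) ^ n - 1 = ∏ i ∈ Finset.range n, (((1 : ℂ) - p) - ζ ^ i) := by
    have := congrArg (Polynomial.eval ((1 : ℂ) - p)) hpoly
    simpa [Polynomial.eval_prod] using this
  have hexp : ∀ j : ℕ, Complex.exp (2 * Real.pi * Complex.I * j / n) = ζ ^ j := by
    intro j
    rw [hζdef, ← Complex.exp_nat_mul]
    congr 1
    ring
  have hMval : (M : ℂ) = (((-1 : ℤ) ^ n * (((1 : ℤ) - p) ^ n - 1) : ℤ) : ℂ) := by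
    rw [hM, Mzn]
    push_cast
    rw [hprod]
    have : ∀ j ∈ Finset.range n,
        Polynomial.aeval (Complex.exp (2 * Real.pi * Complex.I * j / n))
          (Polynomial.C (p : ℤ) + (Polynomial.X - 1)) = -((((1 : ℂ) - p)) - ζ ^ j) := by
      intro j _
      rw [hexp j]
      simp
      ring
    rw [Finset.prod_congr rfl this]
    have hneg : ∀ x ∈ Finset.range n, -(1 - (p : ℂ) - ζ ^ x) = (-1) * (1 - (p : ℂ) - ζ ^ x) :=
      fun x _ => by ring
    rw [Finset.prod_congr rfl hneg, Finset.prod_mul_distrib, Finset.prod_const,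
      Finset.card_range]
  have hMint : M = (-1) ^ n * (((1 : ℤ) - p) ^ n - 1) := by
    exact_mod_cast hMval
  -- step 2: lifting the exponent
  have hxy : (p : ℤ) ∣ ((1 : ℤ) - p) - 1 := ⟨-1, by ring⟩
  have hx : ¬ (p : ℤ) ∣ ((1 : ℤ) - p) := by
    intro h
    have h1 : (p : ℤ) ∣ 1 := by simpa using h.add (dvd_refl (p : ℤ))
    have := Int.le_of_dvd one_pos h1
    omega
  have hmp : emultiplicity ((p : ℤ)) (((1 : ℤ) - p) - 1) = (1 : ℕ) := by
    apply emultiplicity_eq_of_dvd_of_not_dvd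
    · simpa using hxy
    · intro h
      have h2 : (p : ℤ) ^ 2 ∣ (p : ℤ) := by
        have : ((1 : ℤ) - p) - 1 = -(p : ℤ) := by ring
        rw [this, dvd_neg] at h
        exact h
      have h3 := Int.le_of_dvd (by exact_mod_cast hp.pos) h2
      have h4 : (p : ℤ) * 1 < (p : ℤ) * p := by
        apply mul_lt_mul_of_pos_left
        · exact_mod_cast hp.one_lt
        · exact_mod_cast hp.pos
      rw [sq] at h3
      omega
  have hmn : emultiplicity p n = (α : ℕ) := emultiplicity_eq_of_dvd_of_not_dvd hdvd hndvd
  have hlte : emultiplicity ((p : ℤ)) (((1 : ℤ) - p) ^ n - 1 ^ n) = ((α + 1 : ℕ) : ℕ∞) := by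
    rw [Int.emultiplicity_pow_sub_pow hp hodd hxy hx n, hmp, hmn]
    push_cast
    ring
  have hA1 : (p : ℤ) ^ (α + 1) ∣ ((1 : ℤ) - p) ^ n - 1 := by
    have := pow_dvd_of_le_emultiplicity (le_of_eq hlte.symm)
    simpa using this
  have hA2 : ¬ (p : ℤ) ^ (α + 2) ∣ ((1 : ℤ) - p) ^ n - 1 := by
    intro h
    have h' : (p : ℤ) ^ (α + 2) ∣ ((1 : ℤ) - p) ^ n - 1 ^ n := by simpa using h
    have := le_emultiplicity_of_pow_dvd h'
    rw [hlte] at this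
    have : (α + 2 : ℕ) ≤ (α + 1 : ℕ) := by exact_mod_cast this
    omega
  -- step 3: transfer to M
  have hdvdiff : ∀ k : ℕ, ((p : ℤ) ^ k ∣ M ↔ (p : ℤ) ^ k ∣ ((1 : ℤ) - p) ^ n - 1) := by
    intro k
    rw [hMint]
    rcases Nat.even_or_odd n with he | ho
    · rw [he.neg_one_pow, one_mul]
    · rw [ho.neg_one_pow, neg_one_mul, dvd_neg]
  exact ⟨(hdvdiff (α + 1)).mpr hA1, fun h => hA2 ((hdvdiff (α + 2)).mp h)⟩
end

section
/- Let n be a positive integer with 2^α exactly dividing n where α ≥ 2. If F ∈ ℤ[x] and M_{Z_n}(F) = ∏_{j=0}^{n-1} F(e^{2πij/n}) is even, then 2^{α+2} divides M_{Z_n}(F). -/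
open Polynomial Complex Finset

open Matrix



/-- Multiplication-by-`F` matrix on `ℤ[X]/(X^N - ε)` w.r.t. the power basis. -/
noncomputable def TM (N : ℕ) (ε : ℤ) (F : Polynomial ℤ) : Matrix (Fin N) (Fin N) ℤ :=
  fun i j => ∑ k ∈ Finset.range (F.natDegree + 1),
    if (k + (j : ℕ)) % N = (i : ℕ) then F.coeff k * ε ^ ((k + (j : ℕ)) / N) else 0

lemma TM_row_eigen {S : Type*} [CommRing S] (N : ℕ) (hN : 0 < N) (ε : ℤ) (F : Polynomial ℤ)
    (η : S) (hη : η ^ N = ((ε : ℤ) : S)) (j : Fin N) :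
    ∑ i : Fin N, η ^ (i : ℕ) * ((TM N ε F).map (Int.cast : ℤ → S)) i j
      = Polynomial.eval₂ (Int.castRingHom S) η F * η ^ (j : ℕ) := by
  have key : ∀ k : ℕ,
      (∑ i : Fin N, η ^ (i : ℕ) *
        (if (k + (j : ℕ)) % N = (i : ℕ) then ((F.coeff k : S)) * ((ε : S)) ^ ((k + (j : ℕ)) / N) else 0))
      = (F.coeff k : S) * η ^ (k + (j : ℕ)) := by
    intro k
    rw [Finset.sum_eq_single (⟨(k + (j : ℕ)) % N, Nat.mod_lt _ hN⟩ : Fin N)]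
    · rw [if_pos rfl, ← hη, ← pow_mul]
      conv_rhs => rw [← Nat.mod_add_div (k + (j : ℕ)) N, pow_add]
      ring
    · intro b _ hb
      rw [if_neg, mul_zero]
      intro hcontra
      exact hb (Fin.ext hcontra.symm)
    · intro hcontra; exact absurd (Finset.mem_univ _) hcontra
  calc ∑ i : Fin N, η ^ (i : ℕ) * ((TM N ε F).map (Int.cast : ℤ → S)) i j
      = ∑ i : Fin N, ∑ k ∈ Finset.range (F.natDegree + 1),
          η ^ (i : ℕ) * (if (k + (j : ℕ)) % N = (i : ℕ)
            then ((F.coeff k : S)) * ((ε : S)) ^ ((k + (j : ℕ)) / N) else 0) := by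
        refine Finset.sum_congr rfl fun i _ => ?_
        simp only [TM, Matrix.map_apply, Int.cast_sum, Int.cast_ite, Int.cast_mul,
          Int.cast_pow, Int.cast_zero, Finset.mul_sum]
    _ = ∑ k ∈ Finset.range (F.natDegree + 1), ∑ i : Fin N,
          η ^ (i : ℕ) * (if (k + (j : ℕ)) % N = (i : ℕ)
            then ((F.coeff k : S)) * ((ε : S)) ^ ((k + (j : ℕ)) / N) else 0) := Finset.sum_comm
    _ = ∑ k ∈ Finset.range (F.natDegree + 1), (F.coeff k : S) * η ^ (k + (j : ℕ)) := by
        exact Finset.sum_congr rfl fun k _ => key k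
    _ = Polynomial.eval₂ (Int.castRingHom S) η F * η ^ (j : ℕ) := by
        rw [Polynomial.eval₂_eq_sum_range, Finset.sum_mul]
        refine Finset.sum_congr rfl fun k _ => ?_
        rw [pow_add]
        simp only [eq_intCast]
        ring

noncomputable section


/-- the `N` roots of `X^N = (-1)^δ` in `ℂ`. -/
def zv (N δ : ℕ) : Fin N → ℂ := fun j =>
  Complex.exp (2 * Real.pi * Complex.I * (2 * (j : ℕ) + δ) / (2 * N))

variable (N δ : ℕ)

lemma zv_pow (hN : 0 < N) (j : Fin N) : (zv N δ j) ^ N = (((-1 : ℤ) ^ δ : ℤ) : ℂ) := by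
  have hN' : (N : ℂ) ≠ 0 := Nat.cast_ne_zero.2 hN.ne'
  rw [zv, ← Complex.exp_nat_mul]
  have : (N : ℂ) * (2 * Real.pi * Complex.I * (2 * (j : ℕ) + δ) / (2 * N))
      = (j : ℕ) * (2 * Real.pi * Complex.I) + δ * (Real.pi * Complex.I) := by
    field_simp
  rw [this, Complex.exp_add, Complex.exp_nat_mul_two_pi_mul_I (j : ℕ), one_mul]
  rw [show ((δ : ℂ) * (Real.pi * Complex.I)) = (δ : ℕ) * (Real.pi * Complex.I) by push_cast; ring]
  rw [Complex.exp_nat_mul, Complex.exp_pi_mul_I]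
  push_cast
  ring

lemma zv_inj (hN : 0 < N) : Function.Injective (zv N δ) := by
  intro a b hab
  simp only [zv] at hab
  rw [Complex.exp_eq_exp_iff_exists_int] at hab
  obtain ⟨k, hk⟩ := hab
  have hN' : (N : ℂ) ≠ 0 := Nat.cast_ne_zero.2 hN.ne'
  have hpi : (Real.pi : ℂ) ≠ 0 := Complex.ofReal_ne_zero.2 Real.pi_ne_zero
  have hI : Complex.I ≠ 0 := Complex.I_ne_zero
  have key : ((a : ℕ) : ℂ) = ((b : ℕ) : ℂ) + k * N := by
    field_simp at hk
    apply mul_left_cancel₀ (show ((4 : ℂ) * (Real.pi * Complex.I)) ≠ 0 by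
      exact mul_ne_zero (by norm_num) (mul_ne_zero hpi hI))
    linear_combination (2 * (Real.pi:ℂ) * Complex.I) * hk
  have key2 : ((a : ℕ) : ℤ) = ((b : ℕ) : ℤ) + k * N := by exact_mod_cast key
  have ha : ((a : ℕ) : ℤ) < N := by exact_mod_cast a.isLt
  have hb : ((b : ℕ) : ℤ) < N := by exact_mod_cast b.isLt
  have ha0 : (0 : ℤ) ≤ ((a : ℕ) : ℤ) := Int.natCast_nonneg _
  have hb0 : (0 : ℤ) ≤ ((b : ℕ) : ℤ) := Int.natCast_nonneg _
  have hNZ : (0 : ℤ) < N := by exact_mod_cast hN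
  have hk1 : k < 1 := by by_contra hc; push_neg at hc; nlinarith
  have hk2 : -1 < k := by by_contra hc; push_neg at hc; nlinarith
  have hk0 : k = 0 := by omega
  subst hk0
  simp only [zero_mul, add_zero] at key2
  apply Fin.ext
  exact_mod_cast key2

end

lemma det_TM_complex (hN : 0 < N) (F : Polynomial ℤ) :
    ((TM N ((-1 : ℤ) ^ δ) F).map (Int.cast : ℤ → ℂ)).det
      = ∏ j : Fin N, Polynomial.eval₂ (Int.castRingHom ℂ) (zv N δ j) F := by
  set T' := (TM N ((-1 : ℤ) ^ δ) F).map (Int.cast : ℤ → ℂ) with hT'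
  set W := Matrix.vandermonde (zv N δ) with hW
  set d : Fin N → ℂ := fun j => Polynomial.eval₂ (Int.castRingHom ℂ) (zv N δ j) F with hd
  have hcomm : W * T' = Matrix.diagonal d * W := by
    ext j l
    rw [Matrix.mul_apply, Matrix.diagonal_mul]
    calc ∑ i, W j i * T' i l = ∑ i : Fin N, (zv N δ j) ^ (i : ℕ) * T' i l := by
          refine Finset.sum_congr rfl fun i _ => by rw [hW, Matrix.vandermonde_apply]
      _ = d j * (zv N δ j) ^ (l : ℕ) :=
          TM_row_eigen N hN ((-1 : ℤ) ^ δ) F (zv N δ j) (zv_pow N δ hN j) l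
      _ = d j * W j l := by rw [hW, Matrix.vandermonde_apply]
  have hWdet : W.det ≠ 0 := by
    rw [hW, Matrix.det_vandermonde_ne_zero_iff]
    exact zv_inj N δ hN
  have := congrArg Matrix.det hcomm
  rw [Matrix.det_mul, Matrix.det_mul, Matrix.det_diagonal, mul_comm W.det] at this
  exact mul_right_cancel₀ hWdet this


noncomputable def Adet (m : ℕ) (F : Polynomial ℤ) : ℤ := (TM m 1 F).det
noncomputable def Bdet (N : ℕ) (F : Polynomial ℤ) : ℤ := (TM N (-1) F).det

lemma prod_range_even_odd {M : Type*} [CommMonoid M] (g : ℕ → M) (N : ℕ) :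
    ∏ j ∈ Finset.range (2 * N), g j
      = (∏ j ∈ Finset.range N, g (2 * j)) * ∏ j ∈ Finset.range N, g (2 * j + 1) := by
  induction N with
  | zero => simp
  | succ n ih =>
      rw [show 2 * (n + 1) = (2 * n) + 1 + 1 by ring, Finset.prod_range_succ,
        Finset.prod_range_succ, ih, Finset.prod_range_succ, Finset.prod_range_succ]
      rw [mul_assoc]
      exact mul_mul_mul_comm (∏ j ∈ Finset.range n, g (2*j)) (∏ j ∈ Finset.range n, g (2*j+1)) (g (2*n)) (g (2*n+1))

lemma cast_Adet (m : ℕ) (hm : 0 < m) (F : Polynomial ℤ) :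
    ((Adet m F : ℤ) : ℂ) = Mzn m F := by
  have hd := det_TM_complex (N := m) (δ := 0) hm F
  norm_num at hd
  rw [Adet, show (((TM m 1 F).det : ℤ) : ℂ) = ((TM m 1 F).map (Int.cast : ℤ → ℂ)).det
    from RingHom.map_det (Int.castRingHom ℂ) _]
  rw [hd, Mzn, ← Fin.prod_univ_eq_prod_range]
  refine Finset.prod_congr rfl fun j _ => ?_
  rw [Polynomial.aeval_def, algebraMap_int_eq]
  congr 1
  rw [zv]
  congr 1
  have hm' : (m : ℂ) ≠ 0 := Nat.cast_ne_zero.2 hm.ne'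
  push_cast
  field_simp
  ring

lemma cast_Bdet (N : ℕ) (hN : 0 < N) (F : Polynomial ℤ) :
    ((Bdet N F : ℤ) : ℂ) = ∏ j ∈ Finset.range N,
      Polynomial.aeval (Complex.exp (2 * Real.pi * Complex.I * ((2 * j + 1 : ℕ) : ℂ) / ((2 * N : ℕ) : ℂ))) F := by
  have hd := det_TM_complex (N := N) (δ := 1) hN F
  norm_num at hd
  rw [Bdet, show (((TM N (-1) F).det : ℤ) : ℂ) = ((TM N (-1) F).map (Int.cast : ℤ → ℂ)).det
    from RingHom.map_det (Int.castRingHom ℂ) _]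
  rw [hd, ← Fin.prod_univ_eq_prod_range]
  refine Finset.prod_congr rfl fun j _ => ?_
  rw [Polynomial.aeval_def, algebraMap_int_eq]
  congr 1
  rw [zv]
  congr 1
  push_cast
  ring

lemma Mzn_factor (m : ℕ) (hm : 0 < m) (F : Polynomial ℤ) (a : ℕ) :
    Mzn (2 ^ a * m) F
      = ((Adet m F * ∏ k ∈ Finset.range a, Bdet (2 ^ k * m) F : ℤ) : ℂ) := by
  induction a with
  | zero =>
      rw [show (2:ℕ)^0*m = m from by norm_num, Finset.range_zero, Finset.prod_empty, mul_one,
        cast_Adet m hm F]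
  | succ a ih =>
      have hN : 0 < 2 ^ a * m := by positivity
      set N := 2 ^ a * m with hNdef
      have h2N : 2 ^ (a + 1) * m = 2 * N := by rw [hNdef]; ring
      rw [Mzn, h2N, prod_range_even_odd
        (fun j => Polynomial.aeval (Complex.exp (2 * Real.pi * Complex.I * (j : ℂ) / ((2 * N : ℕ) : ℂ))) F) N]
      have hN' : (N : ℂ) ≠ 0 := Nat.cast_ne_zero.2 hN.ne'
      have heven : (∏ j ∈ Finset.range N,
          Polynomial.aeval (Complex.exp (2 * Real.pi * Complex.I * ((2 * j : ℕ) : ℂ) / ((2 * N : ℕ) : ℂ))) F)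
          = Mzn N F := by
        rw [Mzn]
        refine Finset.prod_congr rfl fun j _ => ?_
        have harg : (2 * (Real.pi:ℂ) * Complex.I * ((2*j : ℕ) : ℂ) / ((2*N : ℕ) : ℂ))
            = 2 * (Real.pi:ℂ) * Complex.I * (j : ℂ) / (N : ℂ) := by
          push_cast
          rw [div_eq_div_iff (mul_ne_zero two_ne_zero hN') hN']
          ring
        rw [harg]
      rw [heven, ← cast_Bdet N hN F, ih]
      push_cast [Finset.prod_range_succ]
      ring

abbrev F2 := ZMod 2

noncomputable def T2 (N : ℕ) (F : Polynomial ℤ) : Matrix (Fin N) (Fin N) F2 :=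
  (TM N 1 F).map (Int.cast : ℤ → F2)

lemma TM_map_zmod2 (N : ℕ) (ε : ℤ) (hε : ε = 1 ∨ ε = -1) (F : Polynomial ℤ) :
    (TM N ε F).map (Int.cast : ℤ → F2) = T2 N F := by
  ext i j
  simp only [T2, TM, Matrix.map_apply, Int.cast_sum, Int.cast_ite, Int.cast_mul,
    Int.cast_pow, Int.cast_zero]
  refine Finset.sum_congr rfl fun k _ => ?_
  have h1 : ((ε : ℤ) : F2) ^ ((k + (j:ℕ)) / N) = 1 := by
    rcases hε with h | h <;> simp [h, CharTwo.neg_eq]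
  have h2 : ((1 : ℤ) : F2) ^ ((k + (j:ℕ)) / N) = 1 := by norm_num
  rw [h1, h2]

lemma X_pow_modByMonic (N : ℕ) (hN : 0 < N) (e : ℕ) :
    ((X : Polynomial F2) ^ e) %ₘ (X ^ N - 1) = X ^ (e % N) := by
  have hmonic : ((X : Polynomial F2) ^ N - 1).Monic := by
    simpa using Polynomial.monic_X_pow_sub_C (1 : F2) hN.ne'
  have hdvd : ((X : Polynomial F2) ^ N - 1) ∣ X ^ e - X ^ (e % N) := by
    have heq : (X : Polynomial F2) ^ e - X ^ (e % N)
        = (X ^ (e % N)) * ((X ^ N) ^ (e / N) - 1 ^ (e / N)) := by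
      rw [mul_sub, ← pow_mul, ← pow_add, one_pow, mul_one]
      rw [Nat.mod_add_div]
    rw [heq]
    exact Dvd.dvd.mul_left (sub_dvd_pow_sub_pow _ _ _) _
  have hdeg : Polynomial.degree ((X : Polynomial F2) ^ (e % N))
      < Polynomial.degree ((X : Polynomial F2) ^ N - 1) := by
    rw [Polynomial.degree_X_pow]
    have : ((X : Polynomial F2) ^ N - 1) = X ^ N - Polynomial.C 1 := by rw [Polynomial.C_1]
    rw [this, Polynomial.degree_X_pow_sub_C hN]
    exact_mod_cast Nat.mod_lt e hN
  have : (X : Polynomial F2) ^ e = X ^ (e % N) + (X ^ e - X ^ (e % N)) := by ring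
  rw [this, Polynomial.add_modByMonic,
    (Polynomial.modByMonic_eq_zero_iff_dvd hmonic).2 hdvd, add_zero,
    (Polynomial.modByMonic_eq_self_iff hmonic).2 hdeg]

lemma T2_apply (N : ℕ) (F : Polynomial ℤ) (i j : Fin N) :
    T2 N F i j = ∑ k ∈ Finset.range (F.natDegree + 1),
      if (k + (j : ℕ)) % N = (i : ℕ) then ((F.coeff k : F2)) else 0 := by
  simp only [T2, TM, Matrix.map_apply, Int.cast_sum, Int.cast_ite, Int.cast_mul,
    Int.cast_pow, Int.cast_zero, Int.cast_one, one_pow, mul_one]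

lemma T2_mulVec (N : ℕ) (hN : 0 < N) (F : Polynomial ℤ) (c : Polynomial F2)
    (hc : c.natDegree < N) (i : Fin N) :
    Matrix.mulVec (T2 N F) (fun j : Fin N => c.coeff (j : ℕ)) i
      = ((F.map (Int.castRingHom F2) * c) %ₘ (X ^ N - 1)).coeff (i : ℕ) := by
  classical
  set Fb := F.map (Int.castRingHom F2) with hFb
  set Q : Polynomial F2 := X ^ N - 1 with hQ
  set L : Polynomial F2 →ₗ[F2] F2 :=
    (Polynomial.lcoeff F2 (i : ℕ)).comp (Polynomial.modByMonicHom Q) with hL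
  have hLval : ∀ P : Polynomial F2, L P = (P %ₘ Q).coeff (i : ℕ) := fun P => rfl
  have hFbdeg : Fb.natDegree < F.natDegree + 1 :=
    lt_of_le_of_lt Polynomial.natDegree_map_le (Nat.lt_succ_self _)
  have hFbsum : Fb = ∑ k ∈ Finset.range (F.natDegree + 1),
      Polynomial.monomial k (Fb.coeff k) := Fb.as_sum_range' _ hFbdeg
  have hcsum : c = ∑ j ∈ Finset.range N, Polynomial.monomial j (c.coeff j) :=
    c.as_sum_range' _ hc
  have hprod : Fb * c = ∑ k ∈ Finset.range (F.natDegree + 1), ∑ j ∈ Finset.range N,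
      Polynomial.monomial (k + j) (Fb.coeff k * c.coeff j) := by
    conv_lhs => rw [hFbsum, hcsum]
    rw [Finset.sum_mul_sum]
    exact Finset.sum_congr rfl fun k _ => Finset.sum_congr rfl fun j _ =>
      (Polynomial.monomial_mul_monomial _ _ _ _)
  have hLmon : ∀ (e : ℕ) (b : F2), L (Polynomial.monomial e b)
      = b * (if e % N = (i : ℕ) then 1 else 0) := by
    intro e b
    have : Polynomial.monomial e b = b • ((X : Polynomial F2) ^ e) := by
      rw [Polynomial.smul_X_eq_monomial]
    rw [this, LinearMap.map_smul, hLval, X_pow_modByMonic N hN e, smul_eq_mul]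
    rw [Polynomial.coeff_X_pow]
    congr 1
    by_cases h : e % N = (i : ℕ)
    · rw [if_pos h, if_pos h.symm]
    · rw [if_neg h, if_neg (fun hh => h hh.symm)]
  have hRHS : ((Fb * c) %ₘ Q).coeff (i : ℕ)
      = ∑ k ∈ Finset.range (F.natDegree + 1), ∑ j ∈ Finset.range N,
        Fb.coeff k * c.coeff j * (if (k + j) % N = (i : ℕ) then 1 else 0) := by
    rw [← hLval, hprod, map_sum]
    refine Finset.sum_congr rfl fun k _ => ?_
    rw [map_sum]
    exact Finset.sum_congr rfl fun j _ => hLmon _ _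
  rw [hRHS]
  rw [Matrix.mulVec, dotProduct]
  calc ∑ j : Fin N, T2 N F i j * c.coeff (j : ℕ)
      = ∑ j : Fin N, ∑ k ∈ Finset.range (F.natDegree + 1),
          (if (k + (j:ℕ)) % N = (i : ℕ) then ((F.coeff k : F2)) else 0) * c.coeff (j : ℕ) := by
        refine Finset.sum_congr rfl fun j _ => ?_
        rw [T2_apply, Finset.sum_mul]
    _ = ∑ j ∈ Finset.range N, ∑ k ∈ Finset.range (F.natDegree + 1),
          (if (k + j) % N = (i : ℕ) then ((F.coeff k : F2)) else 0) * c.coeff j := by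
        rw [← Fin.sum_univ_eq_sum_range (fun j => ∑ k ∈ Finset.range (F.natDegree + 1),
          (if (k + j) % N = (i : ℕ) then ((F.coeff k : F2)) else 0) * c.coeff j) N]
    _ = ∑ k ∈ Finset.range (F.natDegree + 1), ∑ j ∈ Finset.range N,
          Fb.coeff k * c.coeff j * (if (k + j) % N = (i : ℕ) then 1 else 0) := by
        rw [Finset.sum_comm]
        refine Finset.sum_congr rfl fun k _ => Finset.sum_congr rfl fun j _ => ?_
        rw [hFb, Polynomial.coeff_map]
        simp only [eq_intCast]
        split <;> ring

lemma Qmonic (N : ℕ) (hN : 0 < N) : ((X : Polynomial F2) ^ N - 1).Monic := by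
  simpa using Polynomial.monic_X_pow_sub_C (1 : F2) hN.ne'

lemma QdegN (N : ℕ) (hN : 0 < N) : ((X : Polynomial F2) ^ N - 1).degree = (N : WithBot ℕ) := by
  have : ((X : Polynomial F2) ^ N - 1) = X ^ N - Polynomial.C 1 := by rw [Polynomial.C_1]
  rw [this, Polynomial.degree_X_pow_sub_C hN]

lemma T2_det_ne_zero (N : ℕ) (hN : 0 < N) (F : Polynomial ℤ)
    (hco : IsCoprime ((X : Polynomial F2) ^ N - 1) (F.map (Int.castRingHom F2))) :
    (T2 N F).det ≠ 0 := by
  classical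
  intro hdet
  obtain ⟨v, hv0, hvk⟩ := Matrix.exists_mulVec_eq_zero_iff.2 hdet
  set c : Polynomial F2 := ∑ j : Fin N, Polynomial.monomial (j : ℕ) (v j) with hc
  have hcoeff : ∀ j : Fin N, c.coeff (j : ℕ) = v j := by
    intro j
    rw [hc, Polynomial.finset_sum_coeff]
    rw [Finset.sum_eq_single j]
    · rw [Polynomial.coeff_monomial, if_pos rfl]
    · intro b _ hb
      rw [Polynomial.coeff_monomial, if_neg (fun hh => hb (Fin.ext hh))]
    · intro hh; exact absurd (Finset.mem_univ _) hh
  have hcdeg : c.degree < (N : WithBot ℕ) := by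
    rw [hc]
    refine lt_of_le_of_lt (Polynomial.degree_sum_le _ _) ?_
    rw [Finset.sup_lt_iff (by exact_mod_cast WithBot.bot_lt_coe N)]
    intro j _
    exact lt_of_le_of_lt (Polynomial.degree_monomial_le _ _) (by exact_mod_cast j.isLt)
  have hc0 : c ≠ 0 := by
    intro h0
    apply hv0
    funext j
    rw [← hcoeff j, h0, Polynomial.coeff_zero]
    rfl
  have hcnat : c.natDegree < N :=
    (Polynomial.natDegree_lt_iff_degree_lt hc0).2 hcdeg
  have hker : ∀ i : Fin N,
      ((F.map (Int.castRingHom F2) * c) %ₘ ((X : Polynomial F2) ^ N - 1)).coeff (i : ℕ) = 0 := by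
    intro i
    rw [← T2_mulVec N hN F c hcnat i]
    have hvv : (fun j : Fin N => c.coeff (j : ℕ)) = v := funext hcoeff
    rw [hvv, hvk]
    rfl
  have hmod0 : (F.map (Int.castRingHom F2) * c) %ₘ ((X : Polynomial F2) ^ N - 1) = 0 := by
    ext n
    rw [Polynomial.coeff_zero]
    by_cases hn : n < N
    · exact hker ⟨n, hn⟩
    · refine Polynomial.coeff_eq_zero_of_degree_lt ?_
      refine lt_of_lt_of_le (Polynomial.degree_modByMonic_lt _ (Qmonic N hN)) ?_
      rw [QdegN N hN]
      exact_mod_cast Nat.le_of_not_lt hn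
  have hdvd : ((X : Polynomial F2) ^ N - 1) ∣ F.map (Int.castRingHom F2) * c :=
    (Polynomial.modByMonic_eq_zero_iff_dvd (Qmonic N hN)).1 hmod0
  have hdvdc : ((X : Polynomial F2) ^ N - 1) ∣ c := hco.dvd_of_dvd_mul_left hdvd
  have := Polynomial.degree_le_of_dvd hdvdc hc0
  rw [QdegN N hN] at this
  exact absurd (lt_of_le_of_lt this hcdeg) (lt_irrefl _)

lemma det_even_of_kernel (N : ℕ) (Mt : Matrix (Fin N) (Fin N) ℤ) (v : Fin N → ℤ) (i₀ : Fin N)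
    (h1 : v i₀ = 1) (hk : ∀ i, (2 : ℤ) ∣ Matrix.mulVec Mt v i) : (2 : ℤ) ∣ Mt.det := by
  classical
  have hcol : (fun k => ∑ i, v i • Mt k i) = Matrix.mulVec Mt v := by
    funext k
    rw [Matrix.mulVec, dotProduct]
    exact Finset.sum_congr rfl fun i _ => by rw [smul_eq_mul, mul_comm]
  have hdet : (Matrix.updateCol Mt i₀ (Matrix.mulVec Mt v)).det = Mt.det := by
    rw [← hcol, Matrix.det_updateCol_sum, h1, one_smul]
  choose w hw using hk
  have hvec : Matrix.mulVec Mt v = (2 : ℤ) • w := by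
    funext i; rw [Pi.smul_apply, smul_eq_mul, ← hw i]
  rw [← hdet, hvec, Matrix.det_updateCol_smul]
  exact Dvd.intro _ rfl

lemma det_four_of_kernel (N : ℕ) (Mt : Matrix (Fin N) (Fin N) ℤ) (v₁ v₂ : Fin N → ℤ)
    (i₁ i₂ : Fin N) (hne : i₁ ≠ i₂) (h11 : v₁ i₁ = 1) (h12 : v₁ i₂ = 0) (h22 : v₂ i₂ = 1)
    (hk1 : ∀ i, (2 : ℤ) ∣ Matrix.mulVec Mt v₁ i) (hk2 : ∀ i, (2 : ℤ) ∣ Matrix.mulVec Mt v₂ i) :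
    (4 : ℤ) ∣ Mt.det := by
  classical
  set M₁ := Matrix.updateCol Mt i₂ (Matrix.mulVec Mt v₂) with hM₁
  have hcol2 : (fun k => ∑ i, v₂ i • Mt k i) = Matrix.mulVec Mt v₂ := by
    funext k
    rw [Matrix.mulVec, dotProduct]
    exact Finset.sum_congr rfl fun i _ => by rw [smul_eq_mul, mul_comm]
  have hdet1 : M₁.det = Mt.det := by
    rw [hM₁, ← hcol2, Matrix.det_updateCol_sum, h22, one_smul]
  have hcol1 : (fun k => ∑ i, v₁ i • M₁ k i) = Matrix.mulVec Mt v₁ := by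
    funext k
    rw [Matrix.mulVec, dotProduct]
    refine Finset.sum_congr rfl fun i _ => ?_
    by_cases hi : i = i₂
    · subst hi; rw [h12]; simp
    · rw [hM₁, Matrix.updateCol_ne hi, smul_eq_mul, mul_comm]
  have hdet2 : (Matrix.updateCol M₁ i₁ (Matrix.mulVec Mt v₁)).det = Mt.det := by
    rw [← hcol1, Matrix.det_updateCol_sum, h11, one_smul, hdet1]
  choose w₁ hw1 using hk1
  choose w₂ hw2 using hk2
  have hvec1 : Matrix.mulVec Mt v₁ = (2 : ℤ) • w₁ := by
    funext i; rw [Pi.smul_apply, smul_eq_mul, ← hw1 i]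
  have hvec2 : Matrix.mulVec Mt v₂ = (2 : ℤ) • w₂ := by
    funext i; rw [Pi.smul_apply, smul_eq_mul, ← hw2 i]
  set P := Matrix.updateCol M₁ i₁ w₁ with hP
  have hstep1 : Mt.det = 2 * P.det := by
    rw [← hdet2, hvec1, Matrix.det_updateCol_smul]
  have hPcol : (fun k => P k i₂) = (2 : ℤ) • w₂ := by
    funext k
    rw [hP, Matrix.updateCol_ne (Ne.symm hne), hM₁, Matrix.updateCol_self, ← hvec2]
  have hstep2 : P.det = 2 * (Matrix.updateCol P i₂ w₂).det := by
    conv_lhs => rw [← Matrix.updateCol_eq_self P i₂]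
    rw [show P.updateCol i₂ (fun k => P k i₂) = P.updateCol i₂ ((2:ℤ) • w₂) by rw [hPcol],
      Matrix.det_updateCol_smul]
  rw [hstep1, hstep2]
  ring_nf
  exact ⟨(Matrix.updateCol P i₂ w₂).det, by ring⟩

lemma F2_val_natCast (a : F2) : ((a.val : F2)) = a := by
  have : ∀ b : F2, ((b.val : F2)) = b := by decide
  exact this a

lemma F2_val_cast (a : F2) : (((a.val : ℤ)) : F2) = a := by
  have : ∀ b : F2, (((b.val : ℤ)) : F2) = b := by decide
  exact this a

lemma F2_ne_zero_eq_one (a : F2) (h : a ≠ 0) : a = 1 := by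
  revert h; revert a; decide

lemma F2_monic (p : Polynomial F2) (hp : p ≠ 0) : p.Monic :=
  F2_ne_zero_eq_one _ (Polynomial.leadingCoeff_ne_zero.2 hp)

lemma TM_kernel_lift (N : ℕ) (hN : 0 < N) (F : Polynomial ℤ) (ε : ℤ) (hε : ε = 1 ∨ ε = -1)
    (c : Polynomial F2) (hcd : c.natDegree < N)
    (hdvd : ((X : Polynomial F2) ^ N - 1) ∣ (F.map (Int.castRingHom F2)) * c) :
    ∀ i, (2 : ℤ) ∣ (Matrix.mulVec (TM N ε F) (fun j : Fin N => ((c.coeff (j : ℕ)).val : ℤ))) i := by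
  intro i
  have hcast : ((Matrix.mulVec (TM N ε F) (fun j : Fin N => ((c.coeff (j : ℕ)).val : ℤ)) i : ℤ) : F2)
      = Matrix.mulVec (T2 N F) (fun j : Fin N => c.coeff (j : ℕ)) i := by
    rw [Matrix.mulVec, dotProduct, Matrix.mulVec, dotProduct]
    push_cast
    refine Finset.sum_congr rfl fun j _ => ?_
    have h1 : ((TM N ε F i j : ℤ) : F2) = T2 N F i j := by
      rw [← TM_map_zmod2 N ε hε F]; rfl
    rw [h1, F2_val_natCast]
  have hz : ((Matrix.mulVec (TM N ε F) (fun j : Fin N => ((c.coeff (j : ℕ)).val : ℤ)) i : ℤ) : F2) = 0 := by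
    rw [hcast, T2_mulVec N hN F c hcd i,
      (Polynomial.modByMonic_eq_zero_iff_dvd (Qmonic N hN)).2 hdvd, Polynomial.coeff_zero]
  have h2 := (ZMod.intCast_zmod_eq_zero_iff_dvd _ 2).1 hz
  exact_mod_cast h2

lemma dvd2_TM (N : ℕ) (hN : 0 < N) (F : Polynomial ℤ) (ε : ℤ) (hε : ε = 1 ∨ ε = -1)
    (D : Polynomial F2) (hD0 : D ≠ 0) (hdeg1 : 1 ≤ D.natDegree)
    (hDF : D ∣ F.map (Int.castRingHom F2)) (hDQ : D ∣ ((X : Polynomial F2) ^ N - 1)) :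
    (2 : ℤ) ∣ (TM N ε F).det := by
  obtain ⟨E, hE⟩ := hDQ
  have hQ0 : ((X : Polynomial F2) ^ N - 1) ≠ 0 := (Qmonic N hN).ne_zero
  have hE0 : E ≠ 0 := by rintro rfl; rw [mul_zero] at hE; exact hQ0 hE
  have hQnat : ((X : Polynomial F2) ^ N - 1).natDegree = N := by
    have := QdegN N hN
    exact Polynomial.natDegree_eq_of_degree_eq_some this
  have hsum : D.natDegree + E.natDegree = N := by
    rw [← Polynomial.natDegree_mul hD0 hE0, ← hE, hQnat]
  have hEd : E.natDegree < N := by omega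
  obtain ⟨W, hW⟩ := hDF
  have hdvd : ((X : Polynomial F2) ^ N - 1) ∣ (F.map (Int.castRingHom F2)) * E := by
    rw [hW, hE]; exact ⟨W, by ring⟩
  refine det_even_of_kernel N (TM N ε F) (fun j : Fin N => ((E.coeff (j : ℕ)).val : ℤ))
    ⟨E.natDegree, hEd⟩ ?_ (TM_kernel_lift N hN F ε hε E hEd hdvd)
  have : E.coeff E.natDegree = 1 := F2_monic E hE0
  simp only [this]
  rfl

lemma dvd4_TM (N : ℕ) (hN : 0 < N) (F : Polynomial ℤ) (ε : ℤ) (hε : ε = 1 ∨ ε = -1)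
    (D : Polynomial F2) (hD0 : D ≠ 0) (hdeg2 : 2 ≤ D.natDegree)
    (hDF : D ∣ F.map (Int.castRingHom F2)) (hDQ : D ∣ ((X : Polynomial F2) ^ N - 1)) :
    (4 : ℤ) ∣ (TM N ε F).det := by
  obtain ⟨E, hE⟩ := hDQ
  have hQ0 : ((X : Polynomial F2) ^ N - 1) ≠ 0 := (Qmonic N hN).ne_zero
  have hE0 : E ≠ 0 := by rintro rfl; rw [mul_zero] at hE; exact hQ0 hE
  have hQnat : ((X : Polynomial F2) ^ N - 1).natDegree = N :=
    Polynomial.natDegree_eq_of_degree_eq_some (QdegN N hN)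
  have hsum : D.natDegree + E.natDegree = N := by
    rw [← Polynomial.natDegree_mul hD0 hE0, ← hE, hQnat]
  have hEd : E.natDegree < N := by omega
  have hEd1 : E.natDegree + 1 < N := by omega
  obtain ⟨W, hW⟩ := hDF
  have hdvd1 : ((X : Polynomial F2) ^ N - 1) ∣ (F.map (Int.castRingHom F2)) * E := by
    rw [hW, hE]; exact ⟨W, by ring⟩
  have hXE0 : (X : Polynomial F2) * E ≠ 0 := mul_ne_zero Polynomial.X_ne_zero hE0
  have hXEdeg : ((X : Polynomial F2) * E).natDegree = E.natDegree + 1 := by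
    rw [Polynomial.natDegree_mul Polynomial.X_ne_zero hE0, Polynomial.natDegree_X]
    omega
  have hXEd : ((X : Polynomial F2) * E).natDegree < N := by omega
  have hdvd2 : ((X : Polynomial F2) ^ N - 1) ∣ (F.map (Int.castRingHom F2)) * (X * E) := by
    rw [hW, hE]; exact ⟨X * W, by ring⟩
  have hlead : E.coeff E.natDegree = 1 := F2_monic E hE0
  refine det_four_of_kernel N (TM N ε F)
    (fun j : Fin N => ((E.coeff (j : ℕ)).val : ℤ))
    (fun j : Fin N => (((X * E : Polynomial F2).coeff (j : ℕ)).val : ℤ))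
    ⟨E.natDegree, hEd⟩ ⟨E.natDegree + 1, hEd1⟩
    (by intro h; have := congrArg Fin.val h; simp at this)
    ?_ ?_ ?_
    (TM_kernel_lift N hN F ε hε E hEd hdvd1)
    (TM_kernel_lift N hN F ε hε (X * E) hXEd hdvd2)
  · simp only [hlead]; rfl
  · have : E.coeff (E.natDegree + 1) = 0 :=
      Polynomial.coeff_eq_zero_of_natDegree_lt (Nat.lt_succ_self _)
    simp only [this]; rfl
  · have : (X * E : Polynomial F2).coeff (E.natDegree + 1) = E.coeff E.natDegree := by
      rw [Polynomial.coeff_X_mul]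
    simp only [this, hlead]; rfl

lemma TM_map_id (N : ℕ) (ε : ℤ) (F : Polynomial ℤ) :
    (TM N ε F).map (Int.cast : ℤ → ℤ) = TM N ε F := by
  ext i j; simp [Matrix.map_apply]

lemma eval₂_int (η : ℤ) (F : Polynomial ℤ) :
    Polynomial.eval₂ (Int.castRingHom ℤ) η F = F.eval η := by
  have h : Int.castRingHom ℤ = RingHom.id ℤ := by ext x; simp
  rw [h]
  rfl

lemma det_factor_eval (N : ℕ) (hN : 0 < N) (ε η : ℤ) (hη : η ^ N = ε) (F : Polynomial ℤ) :
    ∃ r : ℤ, (TM N ε F).det = F.eval η * r := by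
  classical
  set T := TM N ε F with hT
  have heig : ∀ j : Fin N, ∑ i : Fin N, η ^ (i : ℕ) * T i j = F.eval η * η ^ (j : ℕ) := by
    intro j
    have h := TM_row_eigen (S := ℤ) N hN ε F η (by exact_mod_cast hη) j
    rwa [TM_map_id, eval₂_int] at h
  set u : Fin N → ℤ := fun i => η ^ (i : ℕ) with hu
  have hcomb : (∑ k : Fin N, u k • T k) = F.eval η • u := by
    funext j
    rw [Finset.sum_apply]
    calc ∑ k : Fin N, (u k • T k) j = ∑ k : Fin N, η ^ (k : ℕ) * T k j :=
          Finset.sum_congr rfl fun k _ => rfl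
      _ = F.eval η * η ^ (j : ℕ) := heig j
      _ = (F.eval η • u) j := rfl
  have h1 := Matrix.det_updateRow_sum T (⟨0, hN⟩ : Fin N) u
  rw [hcomb] at h1
  have hu0 : u (⟨0, hN⟩ : Fin N) = 1 := by rw [hu]; exact pow_zero η
  rw [hu0, one_smul, Matrix.det_updateRow_smul] at h1
  exact ⟨(T.updateRow (⟨0, hN⟩ : Fin N) u).det, h1.symm⟩

lemma Adet_factor (m : ℕ) (hm : 0 < m) (F : Polynomial ℤ) :
    ∃ r : ℤ, Adet m F = F.eval 1 * r :=
  det_factor_eval m hm 1 1 (one_pow m) F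

lemma Bdet_factor (m : ℕ) (hm : 0 < m) (hodd : m % 2 = 1) (F : Polynomial ℤ) :
    ∃ r : ℤ, Bdet m F = F.eval (-1) * r :=
  det_factor_eval m hm (-1) (-1) (Odd.neg_one_pow (Nat.odd_iff.2 hodd)) F

noncomputable def sEv (F : Polynomial ℤ) : ℤ :=
  ∑ k ∈ Finset.range (F.natDegree + 1), if k % 2 = 0 then F.coeff k else 0
noncomputable def tOd (F : Polynomial ℤ) : ℤ :=
  ∑ k ∈ Finset.range (F.natDegree + 1), if k % 2 = 1 then F.coeff k else 0

lemma eval_one_st (F : Polynomial ℤ) : F.eval 1 = sEv F + tOd F := by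
  rw [Polynomial.eval_eq_sum_range, sEv, tOd, ← Finset.sum_add_distrib]
  refine Finset.sum_congr rfl fun k _ => ?_
  rcases Nat.mod_two_eq_zero_or_one k with h | h <;> simp [h]

lemma eval_neg_one_st (F : Polynomial ℤ) : F.eval (-1) = sEv F - tOd F := by
  rw [Polynomial.eval_eq_sum_range, sEv, tOd, ← Finset.sum_sub_distrib]
  refine Finset.sum_congr rfl fun k _ => ?_
  rcases Nat.mod_two_eq_zero_or_one k with h | h
  · rw [if_pos h, if_neg (by omega), (Nat.even_iff.2 h).neg_one_pow]; ring
  · rw [if_neg (by omega), if_pos h, (Nat.odd_iff.2 h).neg_one_pow]; ring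

lemma Fb_mod_X2 (F : Polynomial ℤ) :
    (F.map (Int.castRingHom F2)) %ₘ ((X : Polynomial F2) ^ 2 - 1)
      = ((sEv F : ℤ) : F2) • (1 : Polynomial F2) + ((tOd F : ℤ) : F2) • (X : Polynomial F2) := by
  classical
  set Fb := F.map (Int.castRingHom F2) with hFb
  have hFbdeg : Fb.natDegree < F.natDegree + 1 :=
    lt_of_le_of_lt Polynomial.natDegree_map_le (Nat.lt_succ_self _)
  have hFbsum : Fb = ∑ k ∈ Finset.range (F.natDegree + 1),
      Polynomial.monomial k (Fb.coeff k) := Fb.as_sum_range' _ hFbdeg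
  have hmod : ∀ k : ℕ, (Polynomial.monomial k (Fb.coeff k)) %ₘ ((X : Polynomial F2) ^ 2 - 1)
      = (Fb.coeff k) • (X : Polynomial F2) ^ (k % 2) := by
    intro k
    have hm : Polynomial.monomial k (Fb.coeff k) = (Fb.coeff k) • ((X : Polynomial F2) ^ k) := by
      rw [Polynomial.smul_X_eq_monomial]
    rw [hm, Polynomial.smul_modByMonic, X_pow_modByMonic 2 (by norm_num) k]
  calc Fb %ₘ ((X : Polynomial F2) ^ 2 - 1)
      = ∑ k ∈ Finset.range (F.natDegree + 1),
          (Polynomial.monomial k (Fb.coeff k)) %ₘ ((X : Polynomial F2) ^ 2 - 1) := by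
        conv_lhs => rw [hFbsum]
        exact map_sum (Polynomial.modByMonicHom ((X : Polynomial F2) ^ 2 - 1)) _ _
    _ = ∑ k ∈ Finset.range (F.natDegree + 1), (Fb.coeff k) • (X : Polynomial F2) ^ (k % 2) := by
        exact Finset.sum_congr rfl fun k _ => hmod k
    _ = ∑ k ∈ Finset.range (F.natDegree + 1),
          ((if k % 2 = 0 then Fb.coeff k else 0) • (1 : Polynomial F2)
            + (if k % 2 = 1 then Fb.coeff k else 0) • (X : Polynomial F2)) := by
        refine Finset.sum_congr rfl fun k _ => ?_
        rcases Nat.mod_two_eq_zero_or_one k with h | h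
        · rw [h, if_pos rfl, if_neg (by omega), pow_zero, zero_smul, add_zero]
        · rw [h, if_neg (by omega), if_pos rfl, pow_one, zero_smul, zero_add]
    _ = ((sEv F : ℤ) : F2) • (1 : Polynomial F2) + ((tOd F : ℤ) : F2) • (X : Polynomial F2) := by
        rw [Finset.sum_add_distrib, ← Finset.sum_smul, ← Finset.sum_smul]
        congr 1
        · congr 1
          rw [sEv]
          push_cast [apply_ite (Int.cast : ℤ → F2)]
          exact Finset.sum_congr rfl fun k _ => by rw [hFb, Polynomial.coeff_map]; simp
        · congr 1
          rw [tOd]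
          push_cast [apply_ite (Int.cast : ℤ → F2)]
          exact Finset.sum_congr rfl fun k _ => by rw [hFb, Polynomial.coeff_map]; simp

lemma odd_sq_diff (s t : ℤ) (hs : s % 2 = 1) (ht : t % 2 = 1) :
    (8 : ℤ) ∣ (s + t) * (s - t) := by
  obtain ⟨u, hu⟩ : ∃ u, s = 2 * u + 1 := ⟨s / 2, by omega⟩
  obtain ⟨v, hv⟩ : ∃ v, t = 2 * v + 1 := ⟨t / 2, by omega⟩
  subst hu hv
  rcases Int.even_or_odd (u - v) with he | ho
  · obtain ⟨w, hw⟩ := he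
    exact ⟨(u + v + 1) * w, by linear_combination (4 * (u + v + 1)) * hw⟩
  · obtain ⟨w, hw⟩ := ho
    exact ⟨(w + v + 1) * (u - v), by linear_combination (4 * (u - v)) * hw⟩

lemma Adet_mod2 (m : ℕ) (F : Polynomial ℤ) : ((Adet m F : ℤ) : F2) = (T2 m F).det := by
  rw [Adet, show (((TM m 1 F).det : ℤ) : F2) = ((TM m 1 F).map (Int.cast : ℤ → F2)).det
    from RingHom.map_det (Int.castRingHom F2) _, TM_map_zmod2 m 1 (Or.inl rfl) F]

lemma Bdet_mod2 (N : ℕ) (F : Polynomial ℤ) : ((Bdet N F : ℤ) : F2) = (T2 N F).det := by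
  rw [Bdet, show (((TM N (-1) F).det : ℤ) : F2) = ((TM N (-1) F).map (Int.cast : ℤ → F2)).det
    from RingHom.map_det (Int.castRingHom F2) _, TM_map_zmod2 N (-1) (Or.inr rfl) F]

lemma X_pow_mul_sub_one (k m : ℕ) :
    ((X : Polynomial F2) ^ (2 ^ k * m) - 1) = ((X : Polynomial F2) ^ m - 1) ^ (2 ^ k) := by
  have hchar : ((X : Polynomial F2) ^ m - 1) ^ (2 ^ k)
      = ((X : Polynomial F2) ^ m) ^ (2 ^ k) - 1 ^ (2 ^ k) := sub_pow_char_pow _ _ k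
  rw [hchar, one_pow, ← pow_mul, mul_comm]

lemma two_dvd_eval_one (F : Polynomial ℤ)
    (h : (X + 1 : Polynomial F2) ∣ F.map (Int.castRingHom F2)) : (2 : ℤ) ∣ F.eval 1 := by
  obtain ⟨W, hW⟩ := h
  have h1 : (F.map (Int.castRingHom F2)).eval 1 = 0 := by
    rw [hW]
    have : (X + 1 : Polynomial F2).eval 1 = 0 := by
      rw [Polynomial.eval_add, Polynomial.eval_X, Polynomial.eval_one]; decide
    rw [Polynomial.eval_mul, this, zero_mul]
  have h2 : (F.map (Int.castRingHom F2)).eval 1 = ((F.eval 1 : ℤ) : F2) := by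
    rw [Polynomial.eval_map, Polynomial.eval₂_at_one]; rfl
  rw [h2] at h1
  exact_mod_cast (ZMod.intCast_zmod_eq_zero_iff_dvd _ 2).1 h1

lemma pow_dvd_prod_int (α : ℕ) (g : ℕ → ℤ) (d : ℤ) (h : ∀ k ∈ Finset.range α, d ∣ g k) :
    d ^ α ∣ ∏ k ∈ Finset.range α, g k := by
  calc d ^ α = ∏ _k ∈ Finset.range α, d := by rw [Finset.prod_const, Finset.card_range]
    _ ∣ ∏ k ∈ Finset.range α, g k := Finset.prod_dvd_prod_of_dvd _ _ h

theorem stmt3 (n α : ℕ) (hn : 0 < n) (hα : 2 ≤ α)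
    (hdvd : 2 ^ α ∣ n) (hndvd : ¬ 2 ^ (α + 1) ∣ n)
    (F : Polynomial ℤ) (M : ℤ) (hM : (M : ℂ) = Mzn n F)
    (h : 2 ∣ M) : 2 ^ (α + 2) ∣ M := by
  classical
  obtain ⟨m, hnm⟩ := hdvd
  have h2α : 0 < 2 ^ α := Nat.two_pow_pos α
  have hm0 : 0 < m := by
    rcases Nat.eq_zero_or_pos m with h0 | h0
    · subst h0; rw [mul_zero] at hnm; omega
    · exact h0
  have hmodd : m % 2 = 1 := by
    rcases Nat.mod_two_eq_zero_or_one m with h0 | h0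
    · exfalso
      apply hndvd
      obtain ⟨m', hm'⟩ : ∃ m', m = 2 * m' := ⟨m / 2, by omega⟩
      exact ⟨m', by rw [hnm, hm', pow_succ]; ring⟩
    · exact h0
  have hMC : (M : ℂ) = ((Adet m F * ∏ k ∈ Finset.range α, Bdet (2 ^ k * m) F : ℤ) : ℂ) := by
    rw [hM, hnm]; exact Mzn_factor m hm0 F α
  have hMfac : M = Adet m F * ∏ k ∈ Finset.range α, Bdet (2 ^ k * m) F :=
    Int.cast_injective hMC
  set Fb := F.map (Int.castRingHom F2) with hFbdef
  have hBpos : ∀ k : ℕ, 0 < 2 ^ k * m := fun k => by positivity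
  have hnotco : ¬ IsCoprime ((X : Polynomial F2) ^ m - 1) Fb := by
    intro hco
    have hA : (T2 m F).det ≠ 0 := T2_det_ne_zero m hm0 F hco
    have hMz : ((M : ℤ) : F2) = 0 :=
      (ZMod.intCast_zmod_eq_zero_iff_dvd M 2).2 (by exact_mod_cast h)
    rw [hMfac] at hMz
    push_cast at hMz
    rcases mul_eq_zero.1 hMz with hz | hz
    · rw [Adet_mod2] at hz; exact hA hz
    · obtain ⟨k, _, hkz⟩ := Finset.prod_eq_zero_iff.1 hz
      rw [Bdet_mod2] at hkz
      refine T2_det_ne_zero _ (hBpos k) F ?_ hkz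
      rw [X_pow_mul_sub_one]
      exact hco.pow_left
  have hg0 : EuclideanDomain.gcd ((X : Polynomial F2) ^ m - 1) Fb ≠ 0 := by
    intro h0
    exact (Qmonic m hm0).ne_zero (EuclideanDomain.gcd_eq_zero_iff.1 h0).1
  have hgu : ¬ IsUnit (EuclideanDomain.gcd ((X : Polynomial F2) ^ m - 1) Fb) := by
    intro hu
    exact hnotco (EuclideanDomain.gcd_isUnit_iff.1 hu)
  obtain ⟨π, hπirr, hπg⟩ := WfDvdMonoid.exists_irreducible_factor hgu hg0
  have hπF : π ∣ Fb := hπg.trans (EuclideanDomain.gcd_dvd_right _ _)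
  have hπQ : π ∣ ((X : Polynomial F2) ^ m - 1) := hπg.trans (EuclideanDomain.gcd_dvd_left _ _)
  have hπ0 : π ≠ 0 := hπirr.ne_zero
  have hπQk : ∀ k : ℕ, π ∣ ((X : Polynomial F2) ^ (2 ^ k * m) - 1) := fun k => by
    rw [X_pow_mul_sub_one]
    exact hπQ.trans (dvd_pow_self _ (Nat.two_pow_pos k).ne')
  rw [hMfac]
  by_cases hπdeg : 2 ≤ π.natDegree
  · -- Case 1: a common irreducible factor of degree ≥ 2
    have h4A : (4 : ℤ) ∣ Adet m F := dvd4_TM m hm0 F 1 (Or.inl rfl) π hπ0 hπdeg hπF hπQ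
    have h4B : ∀ k ∈ Finset.range α, (4 : ℤ) ∣ Bdet (2 ^ k * m) F := fun k _ =>
      dvd4_TM _ (hBpos k) F (-1) (Or.inr rfl) π hπ0 hπdeg hπF (hπQk k)
    have hbig : (4 : ℤ) * 4 ^ α ∣ Adet m F * ∏ k ∈ Finset.range α, Bdet (2 ^ k * m) F :=
      mul_dvd_mul h4A (pow_dvd_prod_int α _ 4 h4B)
    refine dvd_trans ?_ hbig
    calc (2 : ℤ) ^ (α + 2) ∣ 2 ^ (2 * α + 2) := pow_dvd_pow 2 (by omega)
      _ = 4 * 4 ^ α := by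
          rw [show (4 : ℤ) = 2 ^ 2 by norm_num, ← pow_mul]
          rw [← pow_add]
          congr 1
          omega
  · -- Case 2: the only common irreducible factor is X + 1
    have hdegne : π.natDegree ≠ 0 := by
      intro h0
      refine hπirr.not_isUnit ?_
      rw [Polynomial.eq_C_of_natDegree_eq_zero h0]
      refine Polynomial.isUnit_C.2 (isUnit_iff_ne_zero.2 fun hc => ?_)
      exact hπ0 (by rw [Polynomial.eq_C_of_natDegree_eq_zero h0, hc, map_zero])
    have hdeg1 : π.natDegree = 1 := by omega
    have hπeq : π = X + Polynomial.C (π.coeff 0) := (F2_monic π hπ0).eq_X_add_C hdeg1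
    have hc0 : π.coeff 0 = 1 := by
      rcases eq_or_ne (π.coeff 0) 0 with hz | hz
      · exfalso
        have hπX : π = X := by rw [hπeq, hz, map_zero, add_zero]
        rw [hπX, Polynomial.X_dvd_iff] at hπQ
        rw [Polynomial.coeff_sub, Polynomial.coeff_X_pow, Polynomial.coeff_one] at hπQ
        rw [if_neg (by omega), if_pos rfl] at hπQ
        revert hπQ
        decide
      · exact F2_ne_zero_eq_one _ hz
    have hπX1 : π = X + 1 := by rw [hπeq, hc0, Polynomial.C_1]
    rw [hπX1] at hπF hπQ hπQk
    have hX1deg : (X + 1 : Polynomial F2).natDegree = 1 := by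
      rw [show (X + 1 : Polynomial F2) = X + Polynomial.C 1 by rw [Polynomial.C_1]]
      exact Polynomial.natDegree_X_add_C 1
    have hX1ne : (X + 1 : Polynomial F2) ≠ 0 := by
      rw [show (X + 1 : Polynomial F2) = X + Polynomial.C 1 by rw [Polynomial.C_1]]
      exact (Polynomial.monic_X_add_C 1).ne_zero
    have he1 : (2 : ℤ) ∣ F.eval 1 := two_dvd_eval_one F hπF
    have hst : (2 : ℤ) ∣ sEv F + tOd F := by rw [← eval_one_st]; exact he1
    obtain ⟨β, hβ⟩ : ∃ β, α = β + 1 := ⟨α - 1, by omega⟩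
    rw [hβ, Finset.prod_range_succ']
    by_cases hs2 : (2 : ℤ) ∣ sEv F
    · -- 2b : both coefficient sums even
      have ht2 : (2 : ℤ) ∣ tOd F := by omega
      have hX2dvd : ((X : Polynomial F2) ^ 2 - 1) ∣ Fb := by
        rw [← Polynomial.modByMonic_eq_zero_iff_dvd (Qmonic 2 (by norm_num)), Fb_mod_X2]
        have hs0 : ((sEv F : ℤ) : F2) = 0 :=
          (ZMod.intCast_zmod_eq_zero_iff_dvd _ 2).2 (by exact_mod_cast hs2)
        have ht0 : ((tOd F : ℤ) : F2) = 0 :=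
          (ZMod.intCast_zmod_eq_zero_iff_dvd _ 2).2 (by exact_mod_cast ht2)
        rw [hs0, ht0, zero_smul, zero_smul, add_zero]
      have hsq : ((X : Polynomial F2) ^ 2 - 1) = (X + 1) ^ 2 := by
        rw [CharTwo.add_sq, one_pow, CharTwo.sub_eq_add]
      have hX2Q : ∀ k : ℕ, 1 ≤ k →
          ((X : Polynomial F2) ^ 2 - 1) ∣ ((X : Polynomial F2) ^ (2 ^ k * m) - 1) := by
        intro k hk
        rw [X_pow_mul_sub_one, hsq]
        calc ((X : Polynomial F2) + 1) ^ 2 ∣ ((X : Polynomial F2) ^ m - 1) ^ 2 :=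
              pow_dvd_pow_of_dvd hπQ 2
          _ ∣ ((X : Polynomial F2) ^ m - 1) ^ (2 ^ k) :=
              pow_dvd_pow _ (by calc 2 = 2 ^ 1 := (pow_one 2).symm
                                  _ ≤ 2 ^ k := Nat.pow_le_pow_right (by norm_num) hk)
      have hX2deg : ((X : Polynomial F2) ^ 2 - 1).natDegree = 2 :=
        Polynomial.natDegree_eq_of_degree_eq_some (QdegN 2 (by norm_num))
      have hX2ne : ((X : Polynomial F2) ^ 2 - 1) ≠ 0 := (Qmonic 2 (by norm_num)).ne_zero
      have h2A : (2 : ℤ) ∣ Adet m F :=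
        dvd2_TM m hm0 F 1 (Or.inl rfl) (X + 1) hX1ne (by rw [hX1deg]) hπF hπQ
      have h2B0 : (2 : ℤ) ∣ Bdet (2 ^ 0 * m) F :=
        dvd2_TM _ (hBpos 0) F (-1) (Or.inr rfl) (X + 1) hX1ne (by rw [hX1deg]) hπF (hπQk 0)
      have h4Bk : ∀ k ∈ Finset.range β, (4 : ℤ) ∣ Bdet (2 ^ (k + 1) * m) F := fun k _ =>
        dvd4_TM _ (hBpos (k + 1)) F (-1) (Or.inr rfl) ((X : Polynomial F2) ^ 2 - 1) hX2ne
          (by rw [hX2deg]) hX2dvd (hX2Q (k + 1) (by omega))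
      have hbig : (2 : ℤ) * (4 ^ β * 2)
          ∣ Adet m F * ((∏ k ∈ Finset.range β, Bdet (2 ^ (k + 1) * m) F) * Bdet (2 ^ 0 * m) F) :=
        mul_dvd_mul h2A (mul_dvd_mul (pow_dvd_prod_int β _ 4 h4Bk) h2B0)
      refine dvd_trans ?_ hbig
      calc (2 : ℤ) ^ (β + 1 + 2) ∣ 2 ^ (2 * β + 2) := pow_dvd_pow 2 (by omega)
        _ = 2 * (4 ^ β * 2) := by
            rw [show (4 : ℤ) = 2 ^ 2 by norm_num, ← pow_mul, pow_add]
            ring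
    · -- 2a : both coefficient sums odd
      have hs1 : sEv F % 2 = 1 := by omega
      have ht1 : tOd F % 2 = 1 := by omega
      have h8 : (8 : ℤ) ∣ F.eval 1 * F.eval (-1) := by
        rw [eval_one_st, eval_neg_one_st]; exact odd_sq_diff _ _ hs1 ht1
      obtain ⟨r1, hr1⟩ := Adet_factor m hm0 F
      obtain ⟨r2, hr2⟩ := Bdet_factor m hm0 hmodd F
      have h8AB : (8 : ℤ) ∣ Adet m F * Bdet (2 ^ 0 * m) F := by
        rw [show 2 ^ 0 * m = m by norm_num, hr1, hr2]
        obtain ⟨c, hc⟩ := h8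
        exact ⟨c * (r1 * r2), by rw [show F.eval 1 * r1 * (F.eval (-1) * r2)
          = F.eval 1 * F.eval (-1) * (r1 * r2) by ring, hc]; ring⟩
      have h2Bk : ∀ k ∈ Finset.range β, (2 : ℤ) ∣ Bdet (2 ^ (k + 1) * m) F := fun k _ =>
        dvd2_TM _ (hBpos (k + 1)) F (-1) (Or.inr rfl) (X + 1) hX1ne (by rw [hX1deg]) hπF
          (hπQk (k + 1))
      have hbig : (8 : ℤ) * 2 ^ β
          ∣ (Adet m F * Bdet (2 ^ 0 * m) F) * ∏ k ∈ Finset.range β, Bdet (2 ^ (k + 1) * m) F :=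
        mul_dvd_mul h8AB (pow_dvd_prod_int β _ 2 h2Bk)
      have hre : Adet m F * ((∏ k ∈ Finset.range β, Bdet (2 ^ (k + 1) * m) F) * Bdet (2 ^ 0 * m) F)
          = (Adet m F * Bdet (2 ^ 0 * m) F) * ∏ k ∈ Finset.range β, Bdet (2 ^ (k + 1) * m) F := by
        ring
      rw [hre]
      refine dvd_trans ?_ hbig
      exact dvd_of_eq (by rw [show β + 1 + 2 = 3 + β by omega, pow_add]; norm_num)
end

section
/- Let n be a positive integer with 2^α exactly dividing n, α ≥ 2. Then 2^{α+2} exactly divides M_{Z_n}(4 + (x-1)) = ∏_{j=0}^{n-1} (3 + e^{2πij/n}). -/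
open Polynomial Complex Finset

lemma Mzn_eq (n : ℕ) (hn : 0 < n) (he : Even n) :
    Mzn n (Polynomial.C 4 + (Polynomial.X - 1)) = 3 ^ n - 1 := by
  have hζ := Complex.isPrimitiveRoot_exp n hn.ne'
  have h := X_pow_sub_C_eq_prod hζ hn (one_pow n)
  have h3 := congrArg (Polynomial.eval (-3 : ℂ)) h
  simp only [eval_sub, eval_pow, eval_X, eval_C, eval_prod, eval_mul, mul_one] at h3
  have hMzn : Mzn n (Polynomial.C 4 + (Polynomial.X - 1))
      = ∏ j ∈ Finset.range n, (Complex.exp (2 * Real.pi * Complex.I / n) ^ j + 3) := by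
    unfold Mzn
    refine Finset.prod_congr rfl fun j hj => ?_
    rw [← Complex.exp_nat_mul]
    simp [aeval_def]
    ring_nf
  have key : ∏ j ∈ Finset.range n, (Complex.exp (2 * Real.pi * Complex.I / n) ^ j + 3)
      = (-1 : ℂ) ^ n * ((-3 : ℂ) ^ n - 1) := by
    rw [h3]
    calc ∏ j ∈ Finset.range n, (Complex.exp (2 * Real.pi * Complex.I / n) ^ j + 3)
        = ∏ j ∈ Finset.range n,
            ((-1 : ℂ) * (-3 - Complex.exp (2 * Real.pi * Complex.I / n) ^ j)) :=
          Finset.prod_congr rfl fun j hj => by ring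
      _ = _ := by rw [Finset.prod_mul_distrib, Finset.prod_const, Finset.card_range]
  rw [hMzn, key, he.neg_one_pow, he.neg_pow, one_mul]

lemma int_part (n α : ℕ) (hα : 2 ≤ α)
    (hdvd : 2 ^ α ∣ n) (hndvd : ¬ 2 ^ (α + 1) ∣ n) :
    2 ^ (α + 2) ∣ (3 ^ n - 1 : ℤ) ∧ ¬ 2 ^ (α + 3) ∣ (3 ^ n - 1 : ℤ) := by
  have heven : Even n :=
    even_iff_two_dvd.mpr ((dvd_pow_self 2 (by omega : α ≠ 0)).trans hdvd)
  have hxy : (2 : ℤ) ∣ 3 - 1 := by norm_num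
  have hx : ¬ (2 : ℤ) ∣ 3 := by norm_num
  have h := Int.two_pow_sub_pow (x := 3) (y := 1) hxy hx heven
  have hn4 : emultiplicity (2 : ℤ) ((3:ℤ) + 1) = 2 := by
    rw [show ((3:ℤ)+1) = 2^2 by norm_num]
    exact emultiplicity_pow_self two_ne_zero Int.prime_two.not_unit _
  have hn2 : emultiplicity (2 : ℤ) ((3:ℤ) - 1) = 1 := by
    rw [show ((3:ℤ)-1) = 2^1 by norm_num]
    exact emultiplicity_pow_self two_ne_zero Int.prime_two.not_unit _
  have hnn : emultiplicity (2 : ℤ) (n : ℤ) = α := by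
    refine emultiplicity_eq_coe.mpr ⟨?_, ?_⟩
    · exact_mod_cast Int.natCast_dvd_natCast.mpr hdvd
    · exact_mod_cast fun hc => hndvd (Int.natCast_dvd_natCast.mp (by exact_mod_cast hc))
  rw [hn4, hn2, hnn, one_pow] at h
  have hM : emultiplicity (2:ℤ) (3^n - 1) = (α + 2 : ℕ) := by
    have : emultiplicity (2:ℤ) (3^n - 1) + 1 = ((α + 2 : ℕ) : ℕ∞) + 1 := by
      rw [h]; push_cast; ring
    exact WithTop.add_right_cancel (by exact ENat.one_ne_top) this
  constructor
  · exact pow_dvd_of_le_emultiplicity (le_of_eq hM.symm)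
  · apply not_pow_dvd_of_emultiplicity_lt
    rw [hM]; exact_mod_cast Nat.lt_succ_self _

theorem stmt4 (n α : ℕ) (hn : 0 < n) (hα : 2 ≤ α)
    (hdvd : 2 ^ α ∣ n) (hndvd : ¬ 2 ^ (α + 1) ∣ n)
    (M : ℤ) (hM : (M : ℂ) = Mzn n (Polynomial.C 4 + (Polynomial.X - 1))) :
    2 ^ (α + 2) ∣ M ∧ ¬ 2 ^ (α + 3) ∣ M := by
  have heven : Even n :=
    even_iff_two_dvd.mpr ((dvd_pow_self 2 (by omega : α ≠ 0)).trans hdvd)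
  have hMval : M = 3 ^ n - 1 := by
    have : (M : ℂ) = ((3 ^ n - 1 : ℤ) : ℂ) := by
      rw [hM, Mzn_eq n hn heven]; push_cast; ring
    exact_mod_cast this
  rw [hMval]
  exact int_part n α hα hdvd hndvd
end

section
/- For f, g ∈ ℤ[x] and n a positive integer, M_{Q_{4n}}(f, g) = (-1)^n · M_{Q_{4n}}(g, f). -/
open Polynomial Complex Finset

theorem stmt5 (n : ℕ) (hn : 0 < n) (f g : Polynomial ℤ) :
    MQ n f g = (-1 : ℂ) ^ n * MQ n g f := by
  unfold MQ
  have hN : (n : ℂ) ≠ 0 := Nat.cast_ne_zero.mpr hn.ne'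
  have key : ∀ j ∈ Finset.range (2 * n),
      (Polynomial.aeval (Complex.exp (2 * Real.pi * Complex.I * j / (2 * n))) f *
       Polynomial.aeval (Complex.exp (2 * Real.pi * Complex.I * j / (2 * n)))⁻¹ f -
       Complex.exp (2 * Real.pi * Complex.I * j / (2 * n)) ^ n *
       Polynomial.aeval (Complex.exp (2 * Real.pi * Complex.I * j / (2 * n))) g *
       Polynomial.aeval (Complex.exp (2 * Real.pi * Complex.I * j / (2 * n)))⁻¹ g)
      = (-1 : ℂ) ^ (j + 1) *
      (Polynomial.aeval (Complex.exp (2 * Real.pi * Complex.I * j / (2 * n))) g *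
       Polynomial.aeval (Complex.exp (2 * Real.pi * Complex.I * j / (2 * n)))⁻¹ g -
       Complex.exp (2 * Real.pi * Complex.I * j / (2 * n)) ^ n *
       Polynomial.aeval (Complex.exp (2 * Real.pi * Complex.I * j / (2 * n))) f *
       Polynomial.aeval (Complex.exp (2 * Real.pi * Complex.I * j / (2 * n)))⁻¹ f) := by
    intro j _
    have hz : Complex.exp (2 * Real.pi * Complex.I * j / (2 * n)) ^ n = (-1 : ℂ) ^ j := by
      rw [← Complex.exp_nat_mul]
      have harg : (n : ℂ) * (2 * Real.pi * Complex.I * j / (2 * n)) = j * (Real.pi * Complex.I) := by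
        field_simp
      rw [harg, Complex.exp_nat_mul, Complex.exp_pi_mul_I]
    rw [hz]
    have he : ((-1 : ℂ) ^ j) ^ 2 = 1 := by
      rw [← pow_mul, mul_comm, pow_mul]; norm_num
    rw [pow_succ]
    linear_combination (-(Polynomial.aeval (Complex.exp (2 * Real.pi * Complex.I * j / (2 * n))) f *
       Polynomial.aeval (Complex.exp (2 * Real.pi * Complex.I * j / (2 * n)))⁻¹ f)) * he
  rw [Finset.prod_congr rfl key, Finset.prod_mul_distrib]
  congr 1
  rw [Finset.prod_pow_eq_pow_sum]
  have hsum : ∑ j ∈ Finset.range (2 * n), (j + 1) = n * (2 * n + 1) := by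
    have h2 := Finset.sum_range_id_mul_two (2 * n)
    have h4 : (∑ i ∈ Finset.range (2 * n), i) * 2 + 2 * n = (2 * n) * (2 * n) := by
      rw [h2, ← Nat.mul_succ]
      congr 1
      omega
    rw [Finset.sum_add_distrib, Finset.sum_const, Finset.card_range, smul_eq_mul]
    nlinarith [h4]
  rw [hsum, mul_comm, pow_mul]
  have : (-1 : ℂ) ^ (2 * n + 1) = -1 := by
    rw [pow_succ, pow_mul]; norm_num
  rw [this]
end

section
/- For every odd integer n ≥ 3, setting H(x) = x + x^2 + ... + x^{(n-1)/2}, f(x) = 1 + (x^n+1)H(x) and g(x) = (x^n+1)H(x), one has M_{Q_{4n}}(f, g) = 2n - 1. -/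
open Polynomial Complex Finset

lemma aux_sign : ∀ k : ℕ, ∏ j ∈ Finset.Ico 1 (2*k+2), (if Even j then (-1:ℂ) else 1) = (-1)^k := by
  intro k
  induction k with
  | zero => norm_num
  | succ k ih =>
    have h1 : 2*(k+1)+2 = (2*k+2) + 1 + 1 := by ring
    rw [h1, Finset.prod_Ico_succ_top (by omega), Finset.prod_Ico_succ_top (by omega), ih,
      if_pos (by exact ⟨k+1, by ring⟩), if_neg (by rw [Nat.even_iff]; omega)]
    ring

theorem stmt7 (n : ℕ) (hn : 3 ≤ n) (hodd : Odd n) :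
    MQ n (1 + (Polynomial.X ^ n + 1) * ∑ i ∈ Finset.Icc 1 ((n - 1) / 2), Polynomial.X ^ i)
        ((Polynomial.X ^ n + 1) * ∑ i ∈ Finset.Icc 1 ((n - 1) / 2), Polynomial.X ^ i)
      = (2 * n - 1 : ℂ) := by
  obtain ⟨p, hp⟩ := hodd
  set m := (n - 1) / 2 with hm
  have h2m : 2 * m + 1 = n := by omega
  have hn0 : (n : ℂ) ≠ 0 := by
    exact_mod_cast Nat.cast_ne_zero.mpr (by omega)
  have hcn : (n : ℂ) = 2 * (m : ℂ) + 1 := by exact_mod_cast (congrArg (Nat.cast (R := ℂ)) h2m).symm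
  have hf : ∀ w : ℂ,
      Polynomial.aeval w (1 + (Polynomial.X ^ n + 1) * ∑ i ∈ Finset.Icc 1 m, Polynomial.X ^ i : Polynomial ℤ)
        = 1 + (w^n + 1) * ∑ i ∈ Finset.Icc 1 m, w^i := by
    intro w; simp [map_sum]
  have hg : ∀ w : ℂ,
      Polynomial.aeval w ((Polynomial.X ^ n + 1) * ∑ i ∈ Finset.Icc 1 m, Polynomial.X ^ i : Polynomial ℤ)
        = (w^n + 1) * ∑ i ∈ Finset.Icc 1 m, w^i := by
    intro w; simp [map_sum]
  have key : ∀ j ∈ Finset.range (2 * n),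
      (Polynomial.aeval (Complex.exp (2 * Real.pi * Complex.I * j / (2 * n)))
          (1 + (Polynomial.X ^ n + 1) * ∑ i ∈ Finset.Icc 1 m, Polynomial.X ^ i : Polynomial ℤ) *
        Polynomial.aeval (Complex.exp (2 * Real.pi * Complex.I * j / (2 * n)))⁻¹
          (1 + (Polynomial.X ^ n + 1) * ∑ i ∈ Finset.Icc 1 m, Polynomial.X ^ i : Polynomial ℤ) -
      Complex.exp (2 * Real.pi * Complex.I * j / (2 * n)) ^ n *
        Polynomial.aeval (Complex.exp (2 * Real.pi * Complex.I * j / (2 * n)))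
          ((Polynomial.X ^ n + 1) * ∑ i ∈ Finset.Icc 1 m, Polynomial.X ^ i : Polynomial ℤ) *
        Polynomial.aeval (Complex.exp (2 * Real.pi * Complex.I * j / (2 * n)))⁻¹
          ((Polynomial.X ^ n + 1) * ∑ i ∈ Finset.Icc 1 m, Polynomial.X ^ i : Polynomial ℤ))
      = if j = 0 then (2 * (n:ℂ) - 1) else if Even j then -1 else 1 := by
    intro j hj
    rw [Finset.mem_range] at hj
    set z := Complex.exp (2 * Real.pi * Complex.I * j / (2 * n)) with hzdef
    have hz0 : z ≠ 0 := Complex.exp_ne_zero _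
    rw [hf z, hf z⁻¹, hg z, hg z⁻¹]
    have hzn : z ^ n = (-1 : ℂ) ^ j := by
      rw [hzdef, ← Complex.exp_nat_mul]
      have harg : (n : ℂ) * (2 * Real.pi * Complex.I * j / (2 * n)) = j * (Real.pi * Complex.I) := by
        field_simp
      rw [harg, Complex.exp_nat_mul, Complex.exp_pi_mul_I]
    by_cases hj0 : j = 0
    · subst hj0
      have hz1 : z = 1 := by rw [hzdef]; norm_num
      rw [if_pos rfl, hz1]
      simp only [inv_one, one_pow, Finset.sum_const, Nat.card_Icc, nsmul_eq_mul, mul_one]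
      have : ((m + 1 - 1 : ℕ) : ℂ) = (m : ℂ) := by norm_num
      rw [this, hcn]; ring
    · rw [if_neg hj0]
      by_cases hev : Even j
      · rw [if_pos hev]
        have hzn1 : z ^ n = 1 := by rw [hzn, hev.neg_one_pow]
        have hzin : (z⁻¹) ^ n = 1 := by rw [inv_pow, hzn1, inv_one]
        have hz1 : z ≠ 1 := by
          intro h
          rw [hzdef, Complex.exp_eq_one_iff] at h
          obtain ⟨k, hk⟩ := h
          have h2n0 : ((2 * n : ℕ) : ℂ) ≠ 0 := Nat.cast_ne_zero.mpr (by omega)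
          have hpi : (Real.pi : ℂ) ≠ 0 := by
            exact_mod_cast Real.pi_ne_zero
          have hI : Complex.I ≠ 0 := Complex.I_ne_zero
          have : (j : ℂ) = (k : ℂ) * (2 * n) := by
            field_simp at hk
            have h2 : (2 : ℂ) * Real.pi * Complex.I * j = 2 * Real.pi * Complex.I * (k * (2 * n)) := by
              rw [hk]; push_cast; ring
            have := mul_left_cancel₀ (show (2 : ℂ) * Real.pi * Complex.I ≠ 0 by
              simp [hpi, hI]) h2
            exact this
          have hz : (j : ℤ) = k * (2 * n) := by exact_mod_cast this
          have hdvd : ((2 * n : ℕ) : ℤ) ∣ (j : ℤ) := ⟨k, by rw [hz]; push_cast; ring⟩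
          have hle : ((2 * n : ℕ) : ℤ) ≤ (j : ℤ) := Int.le_of_dvd (by exact_mod_cast Nat.pos_of_ne_zero hj0) hdvd
          have : 2 * n ≤ j := by exact_mod_cast hle
          omega
        have hgeom : ∑ i ∈ Finset.range n, z ^ i = 0 := by
          rw [geom_sum_eq hz1, hzn1, sub_self, zero_div]
        have hIco : ∑ i ∈ Finset.Ico 1 n, z ^ i = -1 := by
          rw [Finset.range_eq_Ico, Finset.sum_eq_sum_Ico_succ_bot (by omega), pow_zero] at hgeom
          norm_num at hgeom
          linear_combination hgeom
        have hb : ∑ i ∈ Finset.Icc 1 m, (z⁻¹) ^ i = ∑ i ∈ Finset.Ico (m+1) n, z ^ i := by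
          have step1 : ∀ i ∈ Finset.Icc 1 m, (z⁻¹) ^ i = z ^ (n - i) := by
            intro i hi
            rw [Finset.mem_Icc] at hi
            rw [pow_sub₀ z hz0 (by omega), hzn1, one_mul, inv_pow]
          rw [Finset.sum_congr rfl step1]
          have : Finset.Icc 1 m = Finset.Ico 1 (m+1) := by rw [Finset.Ico_add_one_right_eq_Icc]
          rw [this, Finset.sum_Ico_reflect (fun i => z ^ i) 1 (by omega)]
          have e1 : n + 1 - (m + 1) = m + 1 := by omega
          have e2 : n + 1 - 1 = n := by omega
          rw [e1, e2]
        have ha : ∑ i ∈ Finset.Icc 1 m, z ^ i = ∑ i ∈ Finset.Ico 1 (m+1), z ^ i := by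
          rw [Finset.Ico_add_one_right_eq_Icc]
        have hsum : (∑ i ∈ Finset.Icc 1 m, z ^ i) + (∑ i ∈ Finset.Icc 1 m, (z⁻¹) ^ i) = -1 := by
          rw [ha, hb, Finset.sum_Ico_consecutive _ (by omega) (by omega), hIco]
        rw [hzn1, hzin]
        linear_combination 2 * hsum
      · rw [if_neg hev]
        have hznm : z ^ n = -1 := by
          rw [hzn, (Nat.not_even_iff_odd.mp hev).neg_one_pow]
        have hzin : (z⁻¹) ^ n = -1 := by rw [inv_pow, hznm]; norm_num
        rw [hznm, hzin]
        ring
  rw [MQ, Finset.prod_congr rfl key]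
  rw [Finset.range_eq_Ico, Finset.prod_eq_prod_Ico_succ_bot (show 0 < 2*n by omega)]
  rw [if_pos rfl]
  have hrest : ∏ j ∈ Finset.Ico (0+1) (2*n), (if j = 0 then (2*(n:ℂ)-1) else if Even j then -1 else 1)
      = ∏ j ∈ Finset.Ico 1 (2*n), (if Even j then (-1:ℂ) else 1) := by
    apply Finset.prod_congr (by norm_num)
    intro x hx
    rw [Finset.mem_Ico] at hx
    rw [if_neg (by omega)]
  rw [hrest]
  have h2n : 2*n = 2*(n-1)+2 := by omega
  rw [h2n, aux_sign (n-1)]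
  have hev : Even (n-1) := ⟨p, by omega⟩
  rw [hev.neg_one_pow, mul_one]
end

section
/- Let p be an odd prime and n a positive integer with p^α exactly dividing n. Setting f(x) = 1 - (1+x^n)(1-x) and g(x) = ((p-1)/2)(1+x^n), one has that p^{2α+1} exactly divides M_{Q_{4n}}(f, g). -/
open Polynomial Complex Finset

/-! ### Auxiliary integer sequences -/

def xseq (e : ℤ) : ℕ → ℤ × ℤ
  | 0 => (1, 0)
  | j+1 => (2 * e * (xseq e j).2, (xseq e j).1 + e * (xseq e j).2)

def Xv (e : ℤ) (n : ℕ) : ℤ :=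
  ∑ k ∈ Finset.range n, (n.choose (k+1) : ℤ) * 2^(n-1-k) * (xseq e k).1

def Yv (e : ℤ) (n : ℕ) : ℤ :=
  ∑ k ∈ Finset.range n, (n.choose (k+1) : ℤ) * 2^(n-1-k) * (xseq e k).2

lemma aux_pow3 (t : ℕ) : 2*t+1 ≤ 3^t := by
  induction t with
  | zero => simp
  | succ t ih =>
    have h1 : 1 ≤ 3^t := Nat.one_le_pow _ _ (by norm_num)
    have h2 : 3^(t+1) = 3*3^t := by ring
    omega

lemma aux_pow3' (t k : ℕ) (h3 : 3^t ≤ k) (h4 : 4 ≤ k) : 2*t+2 ≤ k := by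
  match t with
  | 0 => omega
  | 1 => omega
  | (t+2) =>
    have : 2*(t+2)+2 ≤ 3^(t+2) := by
      induction t with
      | zero => norm_num
      | succ s ih =>
        have h1 : 1 ≤ 3^(s+2) := Nat.one_le_pow _ _ (by norm_num)
        have h2 : 3^(s+1+2) = 3*3^(s+2) := by ring
        omega
    omega

lemma xseq_dvd (p : ℕ) (e : ℤ) (he : (p:ℤ) ∣ e) :
    ∀ j, (p:ℤ)^((j+1)/2) ∣ (xseq e j).1 ∧ (p:ℤ)^(j/2) ∣ (xseq e j).2 := by
  intro j
  induction j with
  | zero => simp [xseq]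
  | succ j ih =>
    constructor
    · show (p:ℤ)^((j+2)/2) ∣ 2 * e * (xseq e j).2
      have h2 : (j+2)/2 = j/2 + 1 := by omega
      rw [h2, pow_succ]
      have := Dvd.dvd.mul_left (mul_dvd_mul ih.2 he) 2
      calc (p:ℤ)^(j/2) * p ∣ 2 * ((xseq e j).2 * e) := this
        _ = 2 * e * (xseq e j).2 := by ring
    · show (p:ℤ)^((j+1)/2) ∣ (xseq e j).1 + e * (xseq e j).2
      refine dvd_add ih.1 ?_
      have h2 : (j+1)/2 ≤ j/2 + 1 := by omega
      refine dvd_trans (pow_dvd_pow _ h2) ?_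
      rw [pow_succ, mul_comm ((p:ℤ)^(j/2)) _]
      exact mul_dvd_mul he ih.2

lemma choose_dvd_of (p : ℕ) (hp : p.Prime) (n k α t : ℕ) (hdvd : p^α ∣ n) (hk : 0 < k)
    (ht : p^t ∣ k) (htk : ¬ p^(t+1) ∣ k) (htα : t ≤ α) : p^(α-t) ∣ n.choose k := by
  match n, k with
  | 0, k =>
    rw [Nat.choose_eq_zero_of_lt hk]
    exact dvd_zero _
  | (m+1), (k0+1) =>
    have hid : (m+1) * m.choose k0 = (m+1).choose (k0+1) * (k0+1) := Nat.add_one_mul_choose_eq m k0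
    have h1 : p^α ∣ (m+1).choose (k0+1) * (k0+1) := hid ▸ (hdvd.mul_right _)
    set k1 := (k0+1) / p^t with hk1def
    have hk1 : p^t * k1 = k0+1 := Nat.mul_div_cancel' ht
    have hpk1 : ¬ p ∣ k1 := by
      intro hd
      exact htk (by rw [pow_succ, ← hk1]; exact mul_dvd_mul_left _ hd)
    have h2 : p^(α-t) * p^t ∣ ((m+1).choose (k0+1) * k1) * p^t := by
      rw [← pow_add]
      have : α - t + t = α := by omega
      rw [this]
      calc p^α ∣ (m+1).choose (k0+1) * (k0+1) := h1
        _ = (m+1).choose (k0+1) * k1 * p^t := by rw [← hk1]; ring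
    have h3 : p^(α-t) ∣ (m+1).choose (k0+1) * k1 :=
      (Nat.mul_dvd_mul_iff_right (pow_pos hp.pos t)).mp h2
    exact Nat.Coprime.dvd_of_dvd_mul_right
      (Nat.Coprime.pow_left _ (hp.coprime_iff_not_dvd.mpr hpk1)) h3

lemma Y_dvd (p : ℕ) (hp : p.Prime) (hp3 : 3 ≤ p) (n α : ℕ) (hdvd : p^α ∣ n) (e : ℤ)
    (he : (p:ℤ) ∣ e) : (p:ℤ)^α ∣ Yv e n := by
  unfold Yv
  apply Finset.dvd_sum
  intro k _
  rcases Nat.eq_zero_or_pos k with rfl | hk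
  · simp [xseq]
  set t := (k+1).factorization p with htdef
  have hpt : p^t ∣ k+1 := Nat.ordProj_dvd _ _
  have h3t : 3^t ≤ k+1 :=
    le_trans (Nat.pow_le_pow_left hp3 t) (Nat.le_of_dvd (by omega) hpt)
  have hy := (xseq_dvd p e he k).2
  rcases le_or_gt α t with h | h
  · -- p^α divides y k
    have h1 : 3^α ≤ k+1 := le_trans (Nat.pow_le_pow_right (by norm_num) h) h3t
    have h2 : 2*α+1 ≤ k+1 := le_trans (aux_pow3 α) h1
    have hα : α ≤ k/2 := by omega
    exact Dvd.dvd.mul_left (dvd_trans (pow_dvd_pow _ hα) hy) _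
  · have hc : p^(α-t) ∣ n.choose (k+1) :=
      choose_dvd_of p hp n (k+1) α t hdvd (by omega) hpt
        (Nat.pow_succ_factorization_not_dvd (by omega) hp) (le_of_lt h)
    have h2 : 2*t+1 ≤ k+1 := le_trans (aux_pow3 t) h3t
    have hyt : (p:ℤ)^t ∣ (xseq e k).2 := dvd_trans (pow_dvd_pow _ (by omega : t ≤ k/2)) hy
    have : (p:ℤ)^α = (p:ℤ)^(α-t) * (p:ℤ)^t := by rw [← pow_add]; congr 1; omega
    rw [this, mul_assoc]
    refine mul_dvd_mul ?_ (hyt.mul_left _)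
    exact_mod_cast Int.natCast_dvd_natCast.mpr hc

lemma X_term_dvd (p : ℕ) (hp : p.Prime) (hp3 : 3 ≤ p) (n α : ℕ) (hdvd : p^α ∣ n) (e : ℤ)
    (he : (p:ℤ) ∣ e) (k : ℕ) (hk : 3 ≤ k) :
    (p:ℤ)^(α+1) ∣ (n.choose (k+1) : ℤ) * 2^(n-1-k) * (xseq e k).1 := by
  set t := (k+1).factorization p with htdef
  have hpt : p^t ∣ k+1 := Nat.ordProj_dvd _ _
  have h3t : 3^t ≤ k+1 :=
    le_trans (Nat.pow_le_pow_left hp3 t) (Nat.le_of_dvd (by omega) hpt)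
  have hx := (xseq_dvd p e he k).1
  rcases le_or_gt α t with h | h
  · have h1 : 3^α ≤ k+1 := le_trans (Nat.pow_le_pow_right (by norm_num) h)
      (le_trans (Nat.pow_le_pow_right (by norm_num) le_rfl) h3t)
    have h2 : 2*α+2 ≤ k+1 := aux_pow3' α (k+1) h1 (by omega)
    have hα : α + 1 ≤ (k+1)/2 := by omega
    exact Dvd.dvd.mul_left (dvd_trans (pow_dvd_pow _ hα) hx) _
  · have hc : p^(α-t) ∣ n.choose (k+1) :=
      choose_dvd_of p hp n (k+1) α t hdvd (by omega) hpt
        (Nat.pow_succ_factorization_not_dvd (by omega) hp) (le_of_lt h)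
    have h2 : 2*t+2 ≤ k+1 := aux_pow3' t (k+1) h3t (by omega)
    have hxt : (p:ℤ)^(t+1) ∣ (xseq e k).1 :=
      dvd_trans (pow_dvd_pow _ (by omega : t+1 ≤ (k+1)/2)) hx
    have : (p:ℤ)^(α+1) = (p:ℤ)^(α-t) * (p:ℤ)^(t+1) := by rw [← pow_add]; congr 1; omega
    rw [this, mul_assoc]
    refine mul_dvd_mul ?_ (hxt.mul_left _)
    exact_mod_cast Int.natCast_dvd_natCast.mpr hc


lemma exact_unit (p : ℕ) (hp : p.Prime) (α n' : ℕ) (c : ℤ) (hc : ¬ (p:ℤ) ∣ c)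
    (hd : p^α ∣ n') (hnd : ¬ p^(α+1) ∣ n') :
    (p:ℤ)^α ∣ (n':ℤ) * c ∧ ¬ (p:ℤ)^(α+1) ∣ (n':ℤ) * c := by
  have hpz : Prime (p:ℤ) := Nat.prime_iff_prime_int.mp hp
  constructor
  · exact Dvd.dvd.mul_right (by exact_mod_cast hd) c
  · intro h
    have hco : IsCoprime ((p:ℤ)^(α+1)) c := ((hpz.coprime_iff_not_dvd).mpr hc).pow_left
    have : (p:ℤ)^(α+1) ∣ (n':ℤ) := hco.dvd_of_dvd_mul_right h
    exact hnd (by exact_mod_cast this)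

lemma X_exact (p : ℕ) (hp : p.Prime) (hodd : Odd p) (n α : ℕ) (hn : 0 < n)
    (hdvd : p^α ∣ n) (hndvd : ¬ p^(α+1) ∣ n) :
    (p:ℤ)^α ∣ Xv ((p:ℤ)*(2-(p:ℤ))) n ∧ ¬ (p:ℤ)^(α+1) ∣ Xv ((p:ℤ)*(2-(p:ℤ))) n := by
  set e : ℤ := (p:ℤ)*(2-(p:ℤ)) with hedef
  have he : (p:ℤ) ∣ e := ⟨2-(p:ℤ), rfl⟩
  have hp2 := hp.two_le
  have hpm := Nat.odd_iff.mp hodd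
  have hp3 : 3 ≤ p := by omega
  have hpz : Prime (p:ℤ) := Nat.prime_iff_prime_int.mp hp
  have hnp2 : ¬ (p:ℤ) ∣ 2 := by
    intro h
    have h2 : p ∣ 2 := by exact_mod_cast h
    have := Nat.le_of_dvd (by norm_num) h2
    omega
  have hnp2pow : ∀ k : ℕ, ¬ (p:ℤ) ∣ 2^k := fun k h => hnp2 (hpz.dvd_of_dvd_pow h)
  rcases lt_or_ge n 3 with h3 | h3
  · -- small cases n = 1, 2
    have hα : α = 0 := by
      by_contra hne
      have h1 : p ∣ p^α := dvd_pow_self p hne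
      have h2 : p ∣ n := h1.trans hdvd
      have := Nat.le_of_dvd hn h2
      omega
    subst hα
    interval_cases n
    · have hX1 : Xv e 1 = 1 := by
        simp [Xv, xseq]
      rw [hX1]
      refine ⟨one_dvd _, ?_⟩
      intro h
      rw [zero_add, pow_one] at h
      have h2 : p ∣ 1 := by exact_mod_cast h
      exact absurd (Nat.dvd_one.mp h2) (by omega)
    · have hX2 : Xv e 2 = 4 := by
        rw [Xv]
        rw [Finset.sum_range_succ, Finset.sum_range_succ, Finset.sum_range_zero]
        simp [xseq]
      rw [hX2]
      refine ⟨one_dvd _, ?_⟩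
      intro h
      rw [pow_one] at h
      have h4 : (p:ℤ) ∣ 2^2 := by norm_num at h ⊢; exact_mod_cast h
      exact hnp2pow 2 h4
  · obtain ⟨m, rfl⟩ : ∃ m, n = m+3 := ⟨n-3, by omega⟩
    set T : ℕ → ℤ := fun k => ((m+3).choose (k+1) : ℤ) * 2^(m+3-1-k) * (xseq e k).1 with hT
    have hXT : Xv e (m+3) = T 0 + (T 2 + ∑ k ∈ ((Finset.range (m+3)).erase 0).erase 2, T k) := by
      rw [Xv]
      rw [← Finset.add_sum_erase _ T (show 0 ∈ Finset.range (m+3) by simp)]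
      rw [← Finset.add_sum_erase _ T
        (show 2 ∈ (Finset.range (m+3)).erase 0 by
          refine Finset.mem_erase.mpr ⟨by norm_num, ?_⟩
          simp)]
    have hRsum : (p:ℤ)^(α+1) ∣ ∑ k ∈ ((Finset.range (m+3)).erase 0).erase 2, T k := by
      apply Finset.dvd_sum
      intro k hk
      have hk2 : k ≠ 2 := (Finset.mem_erase.mp hk).1
      have hk0 : k ≠ 0 := (Finset.mem_erase.mp (Finset.mem_erase.mp hk).2).1
      rcases eq_or_ne k 1 with rfl | hk1
      · have hT1 : T 1 = 0 := by simp [hT, xseq]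
        rw [hT1]
        exact dvd_zero _
      · exact X_term_dvd p hp hp3 (m+3) α hdvd e he k (by omega)
    have hT0 : T 0 = ((m+3 : ℕ):ℤ) * 2^(m+2) := by
      have h20 : m+3-1-0 = m+2 := by omega
      simp [hT, h20, xseq, Nat.choose_one_right]
    have hT2v : T 2 = ((m+3).choose 3 : ℤ) * 2^m * (2*e) := by
      have h22 : m+3-1-2 = m := by omega
      have hx2 : (xseq e 2).1 = 2*e := by simp [xseq]
      rw [hT]
      simp only [h22, hx2]
    -- the identity 6 * C(m+3,3) = (m+3)(m+2)(m+1)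
    have h1n : (m+3) * (m+2).choose 2 = (m+3).choose 3 * 3 := Nat.add_one_mul_choose_eq (m+2) 2
    have h2n : (m+2) * (m+1).choose 1 = (m+2).choose 2 * 2 := Nat.add_one_mul_choose_eq (m+1) 1
    rw [Nat.choose_one_right] at h2n
    by_cases hp3' : p = 3
    · -- p = 3 : the k = 2 term contributes at level α
      subst hp3'
      have hev : e = -3 := by rw [hedef]; norm_num
      have h1z : ((m:ℤ)+3) * ((m+2).choose 2 : ℤ) = ((m+3).choose 3 : ℤ) * 3 := by
        exact_mod_cast h1n
      have h2z : ((m:ℤ)+2) * ((m:ℤ)+1) = ((m+2).choose 2 : ℤ) * 2 := by exact_mod_cast h2n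
      have hch : ((m+3).choose 3 : ℤ) * 6 = ((m:ℤ)+3)*(((m:ℤ)+2)*((m:ℤ)+1)) := by
        linear_combination (-2:ℤ)*h1z - ((m:ℤ)+3)*h2z
      have hp2m : (2:ℤ)^(m+2) = 2^m * 4 := by rw [pow_add]; norm_num
      have hV : T 0 + T 2 = ((m+3:ℕ):ℤ) * (2^m * (4 - ((m:ℤ)+2)*((m:ℤ)+1))) := by
        rw [hT0, hT2v, hev]
        push_cast
        linear_combination (-(2:ℤ)^m) * hch + ((m:ℤ)+3) * hp2m
      have hw3 : ¬ (3:ℤ) ∣ (2:ℤ)^m * (4 - ((m:ℤ)+2)*((m:ℤ)+1)) := by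
        intro hdv
        have h3z : Prime (3:ℤ) := Int.prime_three
        rcases (h3z.dvd_mul.mp hdv) with h | h
        · exact absurd (h3z.dvd_of_dvd_pow h) (by norm_num)
        · obtain ⟨q, hq⟩ := h
          obtain ⟨r, hr⟩ : ∃ r, (m:ℤ) = 3*r + (m:ℤ)%3 := ⟨(m:ℤ)/3, by omega⟩
          have h4 : (m:ℤ)%3 = 0 ∨ (m:ℤ)%3 = 1 ∨ (m:ℤ)%3 = 2 := by omega
          rcases h4 with h|h|h <;> rw [h] at hr
          · have h5 : (3:ℤ)*(q + 3*r^2 + 3*r) = 2 := by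
              rw [hr] at hq; linear_combination -hq
            exact absurd ⟨_, h5.symm⟩ (by norm_num : ¬ (3:ℤ) ∣ 2)
          · have h5 : (3:ℤ)*(-(q + 3*r^2 + 5*r)) = 2 := by
              rw [hr] at hq; linear_combination hq
            exact absurd ⟨_, h5.symm⟩ (by norm_num : ¬ (3:ℤ) ∣ 2)
          · have h5 : (3:ℤ)*(-(q + 3*r^2 + 7*r + 2)) = 2 := by
              rw [hr] at hq; linear_combination hq
            exact absurd ⟨_, h5.symm⟩ (by norm_num : ¬ (3:ℤ) ∣ 2)
      have hmain := exact_unit 3 hp α (m+3) _ hw3 hdvd hndvd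
      constructor
      · rw [hXT, ← add_assoc, hV]
        exact dvd_add hmain.1 ((pow_dvd_pow _ (by omega : α ≤ α+1)).trans hRsum)
      · intro h
        apply hmain.2
        have : ((m+3:ℕ):ℤ) * (2^m * (4 - ((m:ℤ)+2)*((m:ℤ)+1)))
            = Xv e (m+3) - ∑ k ∈ ((Finset.range (m+3)).erase 0).erase 2, T k := by
          rw [hXT, ← hV]; ring
        rw [this]
        exact dvd_sub h hRsum
    · -- p ≥ 5 : the k = 2 term is divisible by p^(α+1)
      have hc3 : p^α ∣ (m+3).choose 3 := by
        have hd1 : p^α ∣ (m+3).choose 3 * 3 := h1n ▸ hdvd.mul_right _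
        have hcop : Nat.Coprime (p^α) 3 := by
          refine Nat.Coprime.pow_left _ (hp.coprime_iff_not_dvd.mpr ?_)
          intro hd
          exact hp3' ((Nat.prime_dvd_prime_iff_eq hp Nat.prime_three).mp hd)
        exact hcop.dvd_of_dvd_mul_right hd1
      have hT2d : (p:ℤ)^(α+1) ∣ T 2 := by
        rw [hT2v, pow_succ]
        have hc3z : (p:ℤ)^α ∣ ((m+3).choose 3 : ℤ) := by exact_mod_cast hc3
        calc (p:ℤ)^α * p ∣ ((m+3).choose 3 : ℤ) * (2^m * (2*e)) :=
              mul_dvd_mul hc3z (he.mul_left _ |>.mul_left _)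
          _ = ((m+3).choose 3 : ℤ) * 2^m * (2*e) := by ring
      have hmain := exact_unit p hp α (m+3) ((2:ℤ)^(m+2)) (hnp2pow (m+2)) hdvd hndvd
      constructor
      · rw [hXT, hT0]
        exact dvd_add hmain.1 ((pow_dvd_pow _ (by omega : α ≤ α+1)).trans
          (dvd_add hT2d hRsum))
      · intro h
        apply hmain.2
        have : ((m+3:ℕ):ℤ) * 2^(m+2)
            = Xv e (m+3) - (T 2 + ∑ k ∈ ((Finset.range (m+3)).erase 0).erase 2, T k) := by
          rw [hXT, hT0]; ring
        rw [this]
        exact dvd_sub h (dvd_add hT2d hRsum)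


/-! ### Complex computations -/

lemma prod_range_two_mul (F : ℕ → ℂ) (n : ℕ) :
    ∏ j ∈ Finset.range (2*n), F j = ∏ m ∈ Finset.range n, (F (2*m) * F (2*m+1)) := by
  induction n with
  | zero => simp
  | succ n ih =>
    have h2 : 2*(n+1) = 2*n+1+1 := by ring
    rw [h2, Finset.prod_range_succ, Finset.prod_range_succ, ih, Finset.prod_range_succ]
    ring

lemma prod_roots (n : ℕ) (hn : 0 < n) (c : ℂ) :
    ∏ m ∈ Finset.range n, (c - Complex.exp (2*Real.pi*Complex.I*m/n)) = c^n - 1 := by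
  have hprim : IsPrimitiveRoot (Complex.exp (2*Real.pi*Complex.I/n)) n :=
    Complex.isPrimitiveRoot_exp n (by omega)
  have hpoly := X_pow_sub_C_eq_prod hprim hn (one_pow n)
  have h := congrArg (Polynomial.eval c) hpoly
  simp only [Polynomial.eval_sub, Polynomial.eval_pow, Polynomial.eval_X, Polynomial.eval_one,
    Polynomial.eval_prod, Polynomial.eval_C, map_one] at h
  rw [h]
  refine Finset.prod_congr rfl fun m _ => ?_
  congr 1
  rw [mul_one, ← Complex.exp_nat_mul]
  congr 1
  ring

lemma beta_expand (e : ℤ) (n : ℕ) (β : ℂ) (hβ : β^2 = (e:ℂ)*β + 2*(e:ℂ)) :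
    (β + 2)^n - 2^n = β * (((Xv e n : ℤ):ℂ) + ((Yv e n : ℤ):ℂ) * β) := by
  have hpow : ∀ j, β^j = (((xseq e j).1 : ℤ):ℂ) + (((xseq e j).2 : ℤ):ℂ) * β := by
    intro j
    induction j with
    | zero => simp [xseq]
    | succ j ih =>
      rw [pow_succ, ih]
      show _ = ((2*e*(xseq e j).2 : ℤ):ℂ) + (((xseq e j).1 + e*(xseq e j).2 : ℤ):ℂ) * β
      push_cast
      linear_combination (((xseq e j).2 : ℤ):ℂ) * hβ
  rw [add_pow, Finset.sum_range_succ']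
  simp only [pow_zero, one_mul, Nat.sub_zero, Nat.choose_zero_right, Nat.cast_one, mul_one]
  rw [add_sub_cancel_right]
  have hsum : ∑ k ∈ Finset.range n, β^(k+1) * 2^(n-(k+1)) * ((n.choose (k+1) : ℕ):ℂ)
      = ∑ k ∈ Finset.range n,
          (β * (((n.choose (k+1):ℕ):ℂ) * 2^(n-1-k) * (((xseq e k).1:ℤ):ℂ))
            + β * β * (((n.choose (k+1):ℕ):ℂ) * 2^(n-1-k) * (((xseq e k).2:ℤ):ℂ))) := by
    refine Finset.sum_congr rfl fun k _ => ?_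
    have hnk : n-(k+1) = n-1-k := by omega
    rw [hnk, pow_succ, hpow k]
    ring
  rw [hsum, Finset.sum_add_distrib, ← Finset.mul_sum, ← Finset.mul_sum]
  have hXc : ((Xv e n : ℤ):ℂ)
      = ∑ k ∈ Finset.range n, (((n.choose (k+1):ℕ):ℂ) * 2^(n-1-k) * (((xseq e k).1:ℤ):ℂ)) := by
    rw [Xv]
    push_cast
    rfl
  have hYc : ((Yv e n : ℤ):ℂ)
      = ∑ k ∈ Finset.range n, (((n.choose (k+1):ℕ):ℂ) * 2^(n-1-k) * (((xseq e k).2:ℤ):ℂ)) := by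
    rw [Yv]
    push_cast
    rfl
  rw [← hXc, ← hYc]
  ring

lemma MQ_key (p n : ℕ) (hp2 : 2 ≤ p) (hpm : p % 2 = 1) (hn : 0 < n) :
    MQ n (1 - (1 + Polynomial.X ^ n) * (1 - Polynomial.X))
         (Polynomial.C (((p - 1) / 2 : ℕ) : ℤ) * (1 + Polynomial.X ^ n)) * 2^n
    = (((2*((p:ℤ)*(2-(p:ℤ)))*((Xv ((p:ℤ)*(2-(p:ℤ))) n)^2 + ((p:ℤ)*(2-(p:ℤ)))*(Xv ((p:ℤ)*(2-(p:ℤ))) n)*(Yv ((p:ℤ)*(2-(p:ℤ))) n) - 2*((p:ℤ)*(2-(p:ℤ)))*(Yv ((p:ℤ)*(2-(p:ℤ))) n)^2) : ℤ)) : ℂ) := by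
  set e : ℤ := (p:ℤ)*(2-(p:ℤ)) with hedef
  have hnne : (n:ℂ) ≠ 0 := Nat.cast_ne_zero.mpr (by omega)
  have hEe : ((e : ℤ):ℂ) = (p:ℂ)*(2-(p:ℂ)) := by rw [hedef]; push_cast; ring
  obtain ⟨s, hs⟩ : ∃ s : ℂ, s^2 = (4+((e:ℤ):ℂ))^2 - 16 :=
    ⟨((4+((e:ℤ):ℂ))^2 - 16) ^ ((2:ℕ):ℂ)⁻¹, Complex.cpow_nat_inv_pow _ two_ne_zero⟩
  set E : ℂ := ((e:ℤ):ℂ) with hEdef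
  set u : ℂ := (4+E+s)/2 with hu
  set v : ℂ := (4+E-s)/2 with hv
  have huv : u + v = 4 + E := by rw [hu, hv]; ring
  have hmulv : u * v = 4 := by rw [hu, hv]; linear_combination (-1/4 : ℂ) * hs
  set w : ℕ → ℂ := fun m => Complex.exp (2*Real.pi*Complex.I*(m:ℂ)/(n:ℂ)) with hw
  have hwne : ∀ m : ℕ, w m ≠ 0 := fun m => Complex.exp_ne_zero _
  have h2c : ((((p-1)/2 : ℕ):ℤ):ℂ) * 2 = (p:ℂ) - 1 := by
    have hnat : (p-1)/2 * 2 = p - 1 := Nat.div_mul_cancel (by omega : 2 ∣ p - 1)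
    have h1 : ((((p-1)/2 * 2 : ℕ)):ℂ) = ((p - 1 : ℕ):ℂ) := by rw [hnat]
    rw [Nat.cast_mul, Nat.cast_sub (by omega : 1 ≤ p)] at h1
    rw [Int.cast_natCast]
    simpa using h1
  -- Step A : reduce MQ to a product over n-th roots of unity
  have hA : MQ n (1 - (1 + Polynomial.X ^ n) * (1 - Polynomial.X))
      (Polynomial.C (((p - 1) / 2 : ℕ) : ℤ) * (1 + Polynomial.X ^ n))
      = ∏ m ∈ Finset.range n, (4 + E - 2*(w m) - 2*(w m)⁻¹) := by
    rw [MQ, prod_range_two_mul]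
    refine Finset.prod_congr rfl fun m _ => ?_
    set z : ℂ := Complex.exp (2*Real.pi*Complex.I*((2*m : ℕ):ℂ)/(2*(n:ℂ))) with hz
    set z' : ℂ := Complex.exp (2*Real.pi*Complex.I*((2*m+1 : ℕ):ℂ)/(2*(n:ℂ))) with hz'
    have hzexp : ∀ j : ℕ,
        (Complex.exp (2*Real.pi*Complex.I*(j:ℂ)/(2*(n:ℂ))))^n = (-1:ℂ)^j := by
      intro j
      rw [← Complex.exp_nat_mul]
      have harg : (n:ℂ) * (2*Real.pi*Complex.I*(j:ℂ)/(2*(n:ℂ))) = (j:ℂ) * (Real.pi*Complex.I) := by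
        field_simp
      rw [harg, Complex.exp_nat_mul, Complex.exp_pi_mul_I]
    have hz1 : z^n = 1 := by
      rw [hz, hzexp (2*m), pow_mul]
      norm_num
    have hz1' : (z⁻¹)^n = 1 := by rw [inv_pow, hz1, inv_one]
    have hzm1 : z'^n = -1 := by
      rw [hz', hzexp (2*m+1)]
      exact Odd.neg_one_pow ⟨m, by ring⟩
    have hzm1' : (z'⁻¹)^n = -1 := by rw [inv_pow, hzm1]; norm_num
    have hzz : z * z⁻¹ = 1 := mul_inv_cancel₀ (Complex.exp_ne_zero _)
    have hzw : z = w m := by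
      rw [hz, hw]
      congr 1
      push_cast
      field_simp
    have hwz : w m * (w m)⁻¹ = 1 := mul_inv_cancel₀ (hwne m)
    simp only [map_sub, map_mul, map_add, map_one, map_pow, Polynomial.aeval_X,
      Polynomial.aeval_C, algebraMap_int_eq, Int.coe_castRingHom]
    rw [hz1, hz1', hzm1, hzm1', ← hzw]
    linear_combination (4:ℂ)*hzz
      + (-(((((p-1)/2:ℕ):ℤ):ℂ)*2 + (p:ℂ) - 1))*h2c - hEe
  -- Step B : evaluate the product using roots of unity
  have hroots : ∀ c : ℂ, ∏ m ∈ Finset.range n, (c - w m) = c^n - 1 := by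
    intro c
    rw [hw]
    exact prod_roots n hn c
  have hW : ((-1:ℂ))^n * (∏ m ∈ Finset.range n, w m) = -1 := by
    have h0 := hroots 0
    rw [zero_pow (by omega : n ≠ 0)] at h0
    calc ((-1:ℂ))^n * (∏ m ∈ Finset.range n, w m)
        = ∏ m ∈ Finset.range n, ((-1) * w m) := by
          rw [Finset.prod_mul_distrib, Finset.prod_const, Finset.card_range]
      _ = ∏ m ∈ Finset.range n, (0 - w m) := Finset.prod_congr rfl fun m _ => by ring
      _ = -1 := by rw [h0]; ring
  have hU : ∀ c : ℂ, ∏ m ∈ Finset.range n, (2 * w m - c) = (-1:ℂ)^n * (c^n - 2^n) := by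
    intro c
    calc ∏ m ∈ Finset.range n, (2 * w m - c)
        = ∏ m ∈ Finset.range n, ((-2) * (c/2 - w m)) :=
          Finset.prod_congr rfl fun m _ => by ring
      _ = (-2:ℂ)^n * ((c/2)^n - 1) := by
          rw [Finset.prod_mul_distrib, Finset.prod_const, Finset.card_range, hroots]
      _ = (-1:ℂ)^n * (c^n - 2^n) := by
          have h1 : ((c/2)^n) * 2^n = c^n := by
            rw [div_pow, div_mul_cancel₀]
            exact pow_ne_zero n two_ne_zero
          rw [neg_pow (2:ℂ)]
          linear_combination ((-1:ℂ)^n) * h1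
  have hkeym : ∀ m ∈ Finset.range n, (2 * w m) * (4 + E - 2*(w m) - 2*(w m)⁻¹)
      = -((2*w m - u)*(2*w m - v)) := by
    intro m _
    have hwz : w m * (w m)⁻¹ = 1 := mul_inv_cancel₀ (hwne m)
    linear_combination (-2*(w m))*huv + hmulv + (-4:ℂ)*hwz
  have hBig : (2:ℂ)^n * (∏ m ∈ Finset.range n, w m)
        * (∏ m ∈ Finset.range n, (4 + E - 2*(w m) - 2*(w m)⁻¹))
      = (-1:ℂ)^n * ((-1:ℂ)^n * (u^n - 2^n)) * ((-1:ℂ)^n * (v^n - 2^n)) := by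
    calc (2:ℂ)^n * (∏ m ∈ Finset.range n, w m)
          * ∏ m ∈ Finset.range n, (4 + E - 2*(w m) - 2*(w m)⁻¹)
        = ∏ m ∈ Finset.range n, ((2 * w m) * (4 + E - 2*(w m) - 2*(w m)⁻¹)) := by
          rw [Finset.prod_mul_distrib, Finset.prod_mul_distrib, Finset.prod_const,
            Finset.card_range]
      _ = ∏ m ∈ Finset.range n, ((-1) * ((2*w m - u)*(2*w m - v))) :=
          Finset.prod_congr rfl fun m hm => by rw [hkeym m hm]; ring
      _ = (-1:ℂ)^n * ((∏ m ∈ Finset.range n, (2*w m - u)) * (∏ m ∈ Finset.range n, (2*w m - v))) := by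
          rw [Finset.prod_mul_distrib, Finset.prod_mul_distrib, Finset.prod_const,
            Finset.card_range]
      _ = _ := by rw [hU u, hU v]; ring
  have hq2 : ((-1:ℂ)^n) * ((-1:ℂ)^n) = 1 := by
    rw [← pow_add, show n+n = 2*n by ring, pow_mul]
    norm_num
  have hB : (∏ m ∈ Finset.range n, (4 + E - 2*(w m) - 2*(w m)⁻¹)) * 2^n
      = -((u^n - 2^n) * (v^n - 2^n)) := by
    set PG := ∏ m ∈ Finset.range n, (4 + E - 2*(w m) - 2*(w m)⁻¹) with hPG
    set PW := ∏ m ∈ Finset.range n, w m with hPW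
    set q := ((-1:ℂ))^n with hqdef
    linear_combination (-q)*hBig + ((2:ℂ)^n*PG)*hW
      - ((u^n-2^n)*(v^n-2^n)*(q*q+1))*hq2
  -- Step C : binomial expansion in u - 2 and v - 2
  have hβu : (u-2)^2 = E*(u-2) + 2*E := by linear_combination u*huv - hmulv
  have hβv : (v-2)^2 = E*(v-2) + 2*E := by linear_combination v*huv - hmulv
  rw [hEdef] at hβu hβv
  have hun : u^n - 2^n = (u-2) * (((Xv e n : ℤ):ℂ) + ((Yv e n : ℤ):ℂ) * (u-2)) := by
    have h := beta_expand e n (u-2) hβu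
    rw [sub_add_cancel] at h
    exact h
  have hvn : v^n - 2^n = (v-2) * (((Xv e n : ℤ):ℂ) + ((Yv e n : ℤ):ℂ) * (v-2)) := by
    have h := beta_expand e n (v-2) hβv
    rw [sub_add_cancel] at h
    exact h
  have hs1 : (u-2) + (v-2) = E := by linear_combination huv
  have hs2 : (u-2) * (v-2) = -2*E := by linear_combination hmulv - 2*huv
  set Xc : ℂ := ((Xv e n : ℤ):ℂ) with hXcd
  set Yc : ℂ := ((Yv e n : ℤ):ℂ) with hYcd
  have hST : (Xc + Yc*(u-2))*(Xc + Yc*(v-2)) = Xc^2 + E*(Xc*Yc) - 2*E*Yc^2 := by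
    linear_combination (Xc*Yc)*hs1 + (Yc^2)*hs2
  rw [hA]
  calc (∏ m ∈ Finset.range n, (4 + E - 2*(w m) - 2*(w m)⁻¹)) * 2^n
      = -((u^n - 2^n)*(v^n - 2^n)) := hB
    _ = -(((u-2)*(Xc+Yc*(u-2))) * ((v-2)*(Xc+Yc*(v-2)))) := by rw [hun, hvn]
    _ = (-((u-2)*(v-2))) * ((Xc+Yc*(u-2))*(Xc+Yc*(v-2))) := by ring
    _ = (2*E) * (Xc^2 + E*(Xc*Yc) - 2*E*Yc^2) := by rw [hs2, hST]; ring
    _ = _ := by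
        rw [hEdef, hXcd, hYcd]
        push_cast
        ring

theorem stmt10 (p : ℕ) (hp : p.Prime) (hodd : Odd p) (n α : ℕ) (hn : 0 < n)
    (hdvd : p ^ α ∣ n) (hndvd : ¬ p ^ (α + 1) ∣ n)
    (M : ℤ) (hM : (M : ℂ) =
      MQ n (1 - (1 + Polynomial.X ^ n) * (1 - Polynomial.X))
           (Polynomial.C (((p - 1) / 2 : ℕ) : ℤ) * (1 + Polynomial.X ^ n))) :
    (p : ℤ) ^ (2 * α + 1) ∣ M ∧ ¬ (p : ℤ) ^ (2 * α + 2) ∣ M := by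
  have hp2 := hp.two_le
  have hpm := Nat.odd_iff.mp hodd
  have hp3 : 3 ≤ p := by omega
  have hpz : Prime (p:ℤ) := Nat.prime_iff_prime_int.mp hp
  have hnp2 : ¬ (p:ℤ) ∣ 2 := by
    intro h
    have h2 : p ∣ 2 := by exact_mod_cast h
    have := Nat.le_of_dvd (by norm_num) h2
    omega
  set e : ℤ := (p:ℤ)*(2-(p:ℤ)) with hedef
  have he : (p:ℤ) ∣ e := ⟨2-(p:ℤ), rfl⟩
  have hkey := MQ_key p n hp2 hpm hn
  have hMeq : M * 2^n = 2*e*((Xv e n)^2 + e*(Xv e n)*(Yv e n) - 2*e*(Yv e n)^2) := by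
    have h1 : ((M * 2^n : ℤ):ℂ)
        = (((2*e*((Xv e n)^2 + e*(Xv e n)*(Yv e n) - 2*e*(Yv e n)^2)) : ℤ):ℂ) := by
      push_cast
      rw [hM]
      rw [hedef]
      have hk := hkey
      push_cast at hk ⊢
      linear_combination hk
    exact_mod_cast h1
  obtain ⟨hXd, hXnd⟩ := X_exact p hp hodd n α hn hdvd hndvd
  have hYd : (p:ℤ)^α ∣ Yv e n := Y_dvd p hp hp3 n α hdvd e he
  obtain ⟨X0, hX0⟩ := hXd
  have hpX0 : ¬ (p:ℤ) ∣ X0 := by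
    intro h
    apply hXnd
    rw [hX0, pow_succ]
    exact mul_dvd_mul_left _ h
  obtain ⟨Y0, hY0⟩ := hYd
  set N0 : ℤ := X0^2 + e*X0*Y0 - 2*e*Y0^2 with hN0
  have hNN : (Xv e n)^2 + e*(Xv e n)*(Yv e n) - 2*e*(Yv e n)^2 = (p:ℤ)^(2*α) * N0 := by
    rw [hX0, hY0, hN0]
    ring
  have hpN0 : ¬ (p:ℤ) ∣ N0 := by
    intro h
    have hX02 : (p:ℤ) ∣ X0^2 := by
      have hX02e : X0^2 = N0 - e*X0*Y0 + 2*e*Y0^2 := by rw [hN0]; ring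
      rw [hX02e]
      exact dvd_add (dvd_sub h ((he.mul_right X0).mul_right Y0)) ((he.mul_left 2).mul_right _)
    exact hpX0 (hpz.dvd_of_dvd_pow hX02)
  have hfin : M * 2^n = (p:ℤ)^(2*α+1) * (2*(2-(p:ℤ))*N0) := by
    rw [hMeq, hNN, hedef]
    ring
  have hpc : ¬ (p:ℤ) ∣ (2*(2-(p:ℤ))*N0) := by
    intro h
    rcases hpz.dvd_mul.mp h with h | h
    · rcases hpz.dvd_mul.mp h with h | h
      · exact hnp2 h
      · have h2 : (p:ℤ) ∣ 2 := by
          have := dvd_add h (dvd_refl (p:ℤ))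
          rw [show (2-(p:ℤ)) + p = 2 by ring] at this
          exact this
        exact hnp2 h2
    · exact hpN0 h
  constructor
  · have hd : (p:ℤ)^(2*α+1) ∣ M * 2^n := Dvd.intro _ hfin.symm
    have hcop : IsCoprime ((p:ℤ)^(2*α+1)) ((2:ℤ)^n) :=
      (((hpz.coprime_iff_not_dvd).mpr hnp2).pow : IsCoprime _ _)
    exact hcop.dvd_of_dvd_mul_right hd
  · intro h
    have h2 : (p:ℤ)^(2*α+1) * p ∣ (p:ℤ)^(2*α+1) * (2*(2-(p:ℤ))*N0) := by
      rw [← hfin, ← pow_succ]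
      exact dvd_mul_of_dvd_left h _
    have := (mul_dvd_mul_iff_left (a := (p:ℤ)^(2*α+1)) (pow_ne_zero _ hpz.ne_zero)).mp h2
    exact hpc this
end

section
/- Let n be an even positive integer and f, g ∈ ℤ[x]. If M_{Q_{4n}}(f, g) is odd, then M_{Q_{4n}}(f, g) is congruent to 1 or 5 modulo 8. -/
open Polynomial Complex Finset

noncomputable def Fac {L : Type*} [Field L] (n : ℕ) (f g : Polynomial ℤ) (z : L) : L :=
  aeval z f * aeval z⁻¹ f - z ^ n * aeval z g * aeval z⁻¹ g

lemma Fac_inv {L : Type*} [Field L] {n : ℕ} (f g : Polynomial ℤ) {z : L}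
    (hz : z ^ (2 * n) = 1) : Fac n f g z⁻¹ = Fac n f g z := by
  have h2 : z ^ n * z ^ n = 1 := by rw [← pow_add, ← two_mul]; exact hz
  have hinv : (z ^ n)⁻¹ = z ^ n := by
    rw [inv_eq_of_mul_eq_one_right h2]
  unfold Fac
  rw [inv_inv, inv_pow, hinv]
  ring

lemma Fac_map {L L' : Type*} [Field L] [Field L'] (φ : L →+* L') (n : ℕ)
    (f g : Polynomial ℤ) (z : L) : φ (Fac n f g z) = Fac n f g (φ z) := by
  unfold Fac
  have h : ∀ (x : L) (p : Polynomial ℤ), φ (aeval x p) = aeval (φ x) p := fun x p =>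
    (aeval_algHom_apply φ.toIntAlgHom x p).symm
  rw [map_sub, map_mul, map_mul, map_mul, map_pow, h, h, h, h, map_inv₀]

lemma aeval_intCast' {L : Type*} [Field L] (a : ℤ) (p : Polynomial ℤ) :
    aeval ((a : L)) p = ((p.eval a : ℤ) : L) := by
  rw [aeval_def, show ((a:L)) = algebraMap ℤ L a from by simp, eval₂_at_apply]
  simp

lemma Fac_one {L : Type*} [Field L] (n : ℕ) (f g : Polynomial ℤ) :
    Fac n f g (1 : L) = (((f.eval 1)^2 - (g.eval 1)^2 : ℤ) : L) := by
  unfold Fac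
  rw [inv_one, one_pow, show ((1:L)) = ((1:ℤ):L) from by simp, aeval_intCast', aeval_intCast']
  push_cast
  ring

lemma Fac_neg_one {L : Type*} [Field L] {n : ℕ} (hn : Even n) (f g : Polynomial ℤ) :
    Fac n f g (-1 : L) = (((f.eval (-1))^2 - (g.eval (-1))^2 : ℤ) : L) := by
  unfold Fac
  rw [show ((-1:L)⁻¹) = -1 from by rw [inv_neg, inv_one], hn.neg_one_pow,
    show ((-1:L)) = ((-1:ℤ):L) from by norm_num, aeval_intCast', aeval_intCast']
  push_cast
  ring

lemma Fac_pow_sym {L : Type*} [Field L] {n : ℕ} (f g : Polynomial ℤ) {z : L}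
    (hz : z ^ (2 * n) = 1) {j : ℕ} (h2 : j ≤ 2 * n) :
    Fac n f g (z ^ (2 * n - j)) = Fac n f g (z ^ j) := by
  have h : z ^ (2 * n - j) = (z ^ j)⁻¹ := by
    refine eq_inv_of_mul_eq_one_left ?_
    rw [← pow_add, Nat.sub_add_cancel h2, hz]
  rw [h, Fac_inv f g (by rw [← pow_mul, mul_comm, pow_mul, hz, one_pow])]

lemma prod_pairing {L : Type*} [Field L] {n : ℕ} (hn : 0 < n) (u : ℕ → L)
    (hsym : ∀ j, 1 ≤ j → j < 2 * n → u (2 * n - j) = u j) :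
    ∏ j ∈ range (2 * n), u j = u 0 * u n * (∏ j ∈ Ico 1 n, u j) ^ 2 := by
  rw [Finset.range_eq_Ico,
    ← Finset.prod_Ico_consecutive u (by omega : (0:ℕ) ≤ n + 1) (by omega : n + 1 ≤ 2 * n)]
  have h2 : ∏ j ∈ Ico (n + 1) (2 * n), u j = ∏ j ∈ Ico 1 n, u j := by
    refine Finset.prod_nbij (fun j => 2 * n - j) ?_ ?_ ?_ ?_
    · intro a ha
      simp only [Finset.mem_Ico] at ha ⊢
      omega
    · intro a ha b hb hab
      simp only [Finset.coe_Ico, Set.mem_Ico] at ha hb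
      dsimp only at hab
      omega
    · intro b hb
      simp only [Finset.coe_Ico, Set.mem_Ico] at hb
      exact ⟨2 * n - b, by simp only [Finset.coe_Ico, Set.mem_Ico]; omega,
        by show 2 * n - (2 * n - b) = b; omega⟩
    · intro a ha
      rw [Finset.mem_Ico] at ha
      rw [← hsym (2 * n - a) (by omega) (by omega)]
      congr 1
      omega
  have h3 : ∏ j ∈ Ico 0 (n + 1), u j = u 0 * (∏ j ∈ Ico 1 n, u j) * u n := by
    rw [← Finset.prod_Ico_consecutive u (by omega : (0:ℕ) ≤ 1) (by omega : 1 ≤ n + 1),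
      ← Finset.prod_Ico_consecutive u (by omega : (1:ℕ) ≤ n) (by omega : n ≤ n + 1)]
    have e1 : Ico 0 1 = {0} := rfl
    have e2 : Ico n (n + 1) = {n} := by rw [Finset.Ico_add_one_right_eq_Icc, Finset.Icc_self]
    rw [e1, e2, Finset.prod_singleton, Finset.prod_singleton, mul_assoc]
  rw [h2, h3]
  ring

lemma key_reindex {L : Type*} [Field L] {n : ℕ} (hn : 0 < n) (f g : Polynomial ℤ) {z : L}
    (hz1 : z ^ (2 * n) = 1) {i : ℕ} (hco : i.Coprime (2 * n)) :
    ∏ j ∈ Ico 1 n, Fac n f g (z ^ (i * j)) = ∏ j ∈ Ico 1 n, Fac n f g (z ^ j) := by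
  have hred : ∀ m : ℕ, z ^ m = z ^ (m % (2 * n)) := by
    intro m
    conv_lhs => rw [← Nat.div_add_mod m (2 * n)]
    rw [pow_add, pow_mul, hz1, one_pow, one_mul]
  have hcon : Nat.Coprime i n := Nat.Coprime.coprime_dvd_right ⟨2, by ring⟩ hco
  -- facts about r := (i*j) % (2*n)
  have hr : ∀ j, 1 ≤ j → j < n → (i * j) % (2 * n) ≠ 0 ∧ (i * j) % (2 * n) ≠ n := by
    intro j hj1 hj2
    constructor
    · intro h0
      have hd : 2 * n ∣ i * j := Nat.dvd_of_mod_eq_zero h0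
      have : 2 * n ∣ j := (Nat.Coprime.symm hco).dvd_of_dvd_mul_left hd
      have := Nat.le_of_dvd (by omega) this
      omega
    · intro h0
      have hq := Nat.div_add_mod (i * j) (2 * n)
      rw [h0] at hq
      have hd : n ∣ i * j := by
        have h1 : n ∣ 2 * n * (i * j / (2 * n)) := ⟨2 * (i * j / (2 * n)), by ring⟩
        rw [← hq]
        exact Nat.dvd_add h1 dvd_rfl
      have : n ∣ j := (Nat.Coprime.symm hcon).dvd_of_dvd_mul_left hd
      have := Nat.le_of_dvd (by omega) this
      omega
  have hinj : ∀ a ∈ Ico 1 n, ∀ b ∈ Ico 1 n,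
      (if (i * a) % (2 * n) < n then (i * a) % (2 * n) else 2 * n - (i * a) % (2 * n)) =
      (if (i * b) % (2 * n) < n then (i * b) % (2 * n) else 2 * n - (i * b) % (2 * n)) →
      a = b := by
    intro a ha b hb hab
    simp only [Finset.mem_Ico] at ha hb
    have hra := hr a ha.1 ha.2
    have hrb := hr b hb.1 hb.2
    have hla := Nat.mod_lt (i * a) (by omega : 0 < 2 * n)
    have hlb := Nat.mod_lt (i * b) (by omega : 0 < 2 * n)
    have hcan : (i * a) % (2 * n) = (i * b) % (2 * n) → a = b := by
      intro heq
      have : a % (2 * n) = b % (2 * n) :=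
        Nat.ModEq.cancel_left_of_coprime (Nat.Coprime.symm hco) heq
      rw [Nat.mod_eq_of_lt (by omega), Nat.mod_eq_of_lt (by omega)] at this
      exact this
    have hsum : (i * a) % (2 * n) + (i * b) % (2 * n) = 2 * n → False := by
      intro heq
      have h1 : (i * a + i * b) % (2 * n) = 0 := by
        rw [Nat.add_mod, heq, Nat.mod_self]
      have h2 : i * (a + b) ≡ i * 0 [MOD 2 * n] := by
        unfold Nat.ModEq
        rw [Nat.mul_add, Nat.mul_zero, Nat.zero_mod]
        exact h1
      have h3 : a + b ≡ 0 [MOD 2 * n] :=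
        Nat.ModEq.cancel_left_of_coprime (Nat.Coprime.symm hco) h2
      have h4 : (a + b) % (2 * n) = 0 := by simpa [Nat.ModEq] using h3
      have := Nat.dvd_of_mod_eq_zero h4
      have := Nat.le_of_dvd (by omega) this
      omega
    split at hab <;> split at hab
    · exact hcan hab
    · exact absurd (by omega : (i * a) % (2*n) + (i * b) % (2*n) = 2 * n) (fun hh => hsum hh)
    · exact absurd (by omega : (i * a) % (2*n) + (i * b) % (2*n) = 2 * n) (fun hh => hsum hh)
    · exact hcan (by omega)
  refine Finset.prod_nbij
    (fun j => if (i * j) % (2 * n) < n then (i * j) % (2 * n) else 2 * n - (i * j) % (2 * n))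
    ?_ ?_ ?_ ?_
  · intro a ha
    simp only [Finset.mem_Ico] at ha ⊢
    have := hr a ha.1 ha.2
    have := Nat.mod_lt (i * a) (by omega : 0 < 2 * n)
    split <;> omega
  · intro a ha b hb hab
    exact hinj a (by simpa using ha) b (by simpa using hb) hab
  · -- surjective
    intro b hb
    simp only [Finset.coe_Ico, Set.mem_Ico] at hb
    obtain ⟨a, ha, hba⟩ := Finset.surj_on_of_inj_on_of_card_le
      (fun a (_ : a ∈ Ico 1 n) =>
        if (i * a) % (2 * n) < n then (i * a) % (2 * n) else 2 * n - (i * a) % (2 * n))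
      (fun a ha => by
        simp only [Finset.mem_Ico] at ha ⊢
        have := hr a ha.1 ha.2
        have := Nat.mod_lt (i * a) (by omega : 0 < 2 * n)
        split <;> omega)
      (fun a1 a2 ha1 ha2 hab => hinj a1 (by simpa using ha1) a2 (by simpa using ha2) hab)
      le_rfl b (by simp only [Finset.mem_Ico]; omega)
    exact ⟨a, by simpa using ha, hba.symm⟩
  · intro a ha
    simp only [Finset.mem_Ico] at ha
    rw [hred (i * a)]
    split
    · rfl
    · rw [Fac_pow_sym f g hz1 (le_of_lt (Nat.mod_lt _ (by omega)))]
lemma MK_eq (n : ℕ) (hn : 0 < n) (heven : Even n) (f g : Polynomial ℤ)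
    {Np : ℕ+} (hNp : (Np : ℕ) = 2 * n)
    (K : Type) [Field K] [Algebra ℚ K] [IsCyclotomicExtension {(Np : ℕ)} ℚ K]
    {ζK : K} (hζK : IsPrimitiveRoot ζK (2 * n)) :
    ∃ b : ℤ, ∏ j ∈ range (2 * n), Fac n f g (ζK ^ j) =
      ((((f.eval 1)^2 - (g.eval 1)^2) * ((f.eval (-1))^2 - (g.eval (-1))^2) * b^2 : ℤ) : K) := by
  have h2n : (2 * n) ≠ 0 := by omega
  haveI : NeZero (2 * n) := ⟨h2n⟩
  have hζK1 : ζK ^ (2 * n) = 1 := hζK.pow_eq_one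
  set βK : K := ∏ j ∈ Ico 1 n, Fac n f g (ζK ^ j) with hβK
  -- Galois invariance
  have hfix : ∀ σ : K ≃ₐ[ℚ] K, σ βK = βK := by
    intro σ
    have hσζ : IsPrimitiveRoot (σ ζK) (2 * n) := hζK.map_of_injective σ.injective
    obtain ⟨i, hi_lt, hi_eq⟩ := hζK.eq_pow_of_pow_eq_one hσζ.pow_eq_one
    have hprim : IsPrimitiveRoot (ζK ^ i) (2 * n) := by rw [hi_eq]; exact hσζ
    have hco : i.Coprime (2 * n) := (hζK.pow_iff_coprime (by omega) i).mp hprim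
    calc σ βK = ∏ j ∈ Ico 1 n, σ (Fac n f g (ζK ^ j)) := by rw [hβK, map_prod]
      _ = ∏ j ∈ Ico 1 n, Fac n f g (ζK ^ (i * j)) := by
          refine Finset.prod_congr rfl fun j _ => ?_
          have h1 : σ (Fac n f g (ζK ^ j)) = Fac n f g (σ (ζK ^ j)) :=
            Fac_map σ.toAlgHom.toRingHom n f g (ζK ^ j)
          rw [h1, map_pow, ← hi_eq, ← pow_mul]
      _ = βK := key_reindex hn f g hζK1 hco
  -- hence rational
  haveI hgal : IsGalois ℚ K := IsCyclotomicExtension.isGalois {(Np : ℕ)} ℚ K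
  haveI hfd : FiniteDimensional ℚ K := IsCyclotomicExtension.finiteDimensional {(Np : ℕ)} ℚ K
  have hbot : βK ∈ (⊥ : IntermediateField ℚ K) := by
    have htop := ((IsGalois.tfae (F := ℚ) (E := K)).out 0 1).mp hgal
    rw [← htop]
    exact fun σ => hfix σ
  obtain ⟨q, hq⟩ := IntermediateField.mem_bot.mp hbot
  -- integrality
  have hζint : IsIntegral ℤ ζK :=
    ⟨X ^ (2 * n) - C 1, monic_X_pow_sub_C 1 h2n, by simp [hζK1]⟩
  have hadj : ∀ (w : K), w ∈ Algebra.adjoin ℤ {ζK} → ∀ p : Polynomial ℤ,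
      aeval w p ∈ Algebra.adjoin ℤ {ζK} := by
    intro w hw p
    have h1 : aeval w p ∈ Algebra.adjoin ℤ {w} := by
      rw [Algebra.adjoin_singleton_eq_range_aeval]
      exact ⟨p, rfl⟩
    exact Algebra.adjoin_le (Set.singleton_subset_iff.mpr hw) h1
  have hβA : βK ∈ Algebra.adjoin ℤ {ζK} := by
    rw [hβK]
    apply Subalgebra.prod_mem
    intro j hj
    have hzmem : ζK ^ j ∈ Algebra.adjoin ℤ {ζK} :=
      pow_mem (Algebra.subset_adjoin (Set.mem_singleton _)) j
    have hzpow : (ζK ^ j) ^ (2 * n) = 1 := by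
      rw [← pow_mul, mul_comm, pow_mul, hζK1, one_pow]
    have hinvmem : (ζK ^ j)⁻¹ ∈ Algebra.adjoin ℤ {ζK} := by
      have hinv : (ζK ^ j)⁻¹ = (ζK ^ j) ^ (2 * n - 1) := by
        refine inv_eq_of_mul_eq_one_right ?_
        rw [← pow_succ', show (2 * n - 1) + 1 = 2 * n by omega]
        exact hzpow
      rw [hinv]
      exact pow_mem hzmem _
    show Fac n f g (ζK ^ j) ∈ _
    unfold Fac
    exact Subalgebra.sub_mem _
      (Subalgebra.mul_mem _ (hadj _ hzmem f) (hadj _ hinvmem f))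
      (Subalgebra.mul_mem _ (Subalgebra.mul_mem _ (pow_mem hzmem n) (hadj _ hzmem g))
        (hadj _ hinvmem g))
  have hβint : IsIntegral ℤ βK := IsIntegral.of_mem_of_fg _ hζint.fg_adjoin_singleton _ hβA
  rw [← hq] at hβint
  have hqint : IsIntegral ℤ q :=
    (isIntegral_algebraMap_iff (algebraMap ℚ K).injective).mp hβint
  obtain ⟨b, hb⟩ := IsIntegrallyClosed.isIntegral_iff.mp hqint
  -- the value of ζK ^ n
  have hminus : ζK ^ n = -1 := by
    have hsq : (ζK ^ n) * (ζK ^ n) = 1 := by rw [← pow_add, ← two_mul]; exact hζK1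
    rcases mul_self_eq_one_iff.mp hsq with h | h
    · exact absurd h (hζK.pow_ne_one_of_pos_of_lt hn.ne' (by omega))
    · exact h
  refine ⟨b, ?_⟩
  rw [prod_pairing hn (fun j => Fac n f g (ζK ^ j))
      (fun j h1 h2 => Fac_pow_sym f g hζK1 (by omega))]
  show Fac n f g (ζK ^ 0) * Fac n f g (ζK ^ n) * βK ^ 2 = _
  have hβb : βK = ((b : ℤ) : K) := by
    rw [← hq, ← hb]
    simp [IsScalarTower.algebraMap_apply ℤ ℚ K]
  rw [pow_zero, hminus, Fac_one, Fac_neg_one heven, hβb]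
  push_cast
  ring
lemma MQ_eq (n : ℕ) (hn : 0 < n) (heven : Even n) (f g : Polynomial ℤ) :
    ∃ b : ℤ, MQ n f g =
      ((((f.eval 1)^2 - (g.eval 1)^2) * ((f.eval (-1))^2 - (g.eval (-1))^2) * b^2 : ℤ) : ℂ) := by
  have h2n : (2 * n) ≠ 0 := by omega
  set Np : ℕ+ := ⟨2 * n, by omega⟩ with hNpdef
  have hNp : (Np : ℕ) = 2 * n := rfl
  let K := CyclotomicField Np ℚ
  haveI : NeZero (Np : ℕ) := ⟨by rw [hNp]; exact h2n⟩
  haveI : NeZero ((Np : ℕ) : ℚ) := ⟨by rw [hNp]; exact_mod_cast h2n⟩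
  haveI : IsCyclotomicExtension {(Np : ℕ)} ℚ K := CyclotomicField.isCyclotomicExtension (Np : ℕ) ℚ
  let ζK : K := IsCyclotomicExtension.zeta Np ℚ K
  have hζK : IsPrimitiveRoot ζK (2 * n) := IsCyclotomicExtension.zeta_spec Np ℚ K
  letI := IsCyclotomicExtension.isSplittingField_X_pow_sub_one Np ℚ K
  let φ : K →ₐ[ℚ] ℂ := IsSplittingField.lift K (X ^ ((Np : ℕ)) - 1 : Polynomial ℚ)
      (IsAlgClosed.splits _)
  have hζ2 : IsPrimitiveRoot (φ ζK) (2 * n) := hζK.map_of_injective φ.injective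
  set ζ : ℂ := Complex.exp (2 * Real.pi * Complex.I / ((2 * n : ℕ) : ℂ)) with hζdef
  have hζ : IsPrimitiveRoot ζ (2 * n) := Complex.isPrimitiveRoot_exp (2 * n) h2n
  have hMQ : MQ n f g = ∏ j ∈ range (2 * n), Fac n f g (ζ ^ j) := by
    unfold MQ Fac
    refine Finset.prod_congr rfl fun j hj => ?_
    have hexp : Complex.exp (2 * Real.pi * Complex.I * j / (2 * n)) = ζ ^ j := by
      rw [hζdef, ← Complex.exp_nat_mul]
      congr 1
      push_cast
      ring
    rw [hexp]
  have htrans : ∏ j ∈ range (2 * n), Fac n f g (ζ ^ j)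
      = ∏ j ∈ range (2 * n), Fac n f g ((φ ζK) ^ j) := by
    have h1 := hζ.nthRoots_eq (one_pow (2 * n))
    have h2 := hζ2.nthRoots_eq (one_pow (2 * n))
    rw [Finset.prod_eq_multiset_prod, Finset.prod_eq_multiset_prod, Finset.range_val]
    have e1 : (Multiset.range (2 * n)).map (fun j => Fac n f g (ζ ^ j))
        = (Polynomial.nthRoots (2 * n) (1 : ℂ)).map (Fac n f g) := by
      rw [h1, Multiset.map_map]
      simp [Function.comp]
    have e2 : (Multiset.range (2 * n)).map (fun j => Fac n f g ((φ ζK) ^ j))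
        = (Polynomial.nthRoots (2 * n) (1 : ℂ)).map (Fac n f g) := by
      rw [h2, Multiset.map_map]
      simp [Function.comp]
    rw [e1, e2]
  obtain ⟨b, hb⟩ := MK_eq n hn heven f g hNp K hζK
  refine ⟨b, ?_⟩
  rw [hMQ, htrans]
  have hφ : ∏ j ∈ range (2 * n), Fac n f g ((φ ζK) ^ j)
      = φ (∏ j ∈ range (2 * n), Fac n f g (ζK ^ j)) := by
    rw [map_prod]
    refine Finset.prod_congr rfl fun j hj => ?_
    rw [show φ (Fac n f g (ζK ^ j)) = Fac n f g (φ (ζK ^ j)) from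
      Fac_map φ.toRingHom n f g (ζK ^ j), map_pow]
  rw [hφ, hb, map_intCast]

lemma sq_mod8 (x : ℤ) : (x % 2 = 1 ∧ x ^ 2 % 8 = 1) ∨ (x % 2 = 0 ∧ x ^ 2 % 8 = 0) ∨
    (x % 2 = 0 ∧ x ^ 2 % 8 = 4) := by
  have h := Int.emod_emod_of_dvd x (by norm_num : (2:ℤ) ∣ 8)
  have h2 : x ^ 2 % 8 = (x % 8) ^ 2 % 8 := by rw [pow_two, pow_two]; exact Int.mul_emod x x 8
  have h3 : 0 ≤ x % 8 := Int.emod_nonneg _ (by norm_num)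
  have h4 : x % 8 < 8 := Int.emod_lt_of_pos _ (by norm_num)
  rcases (by omega : x % 8 = 0 ∨ x % 8 = 1 ∨ x % 8 = 2 ∨ x % 8 = 3 ∨ x % 8 = 4 ∨ x % 8 = 5
    ∨ x % 8 = 6 ∨ x % 8 = 7) with hv|hv|hv|hv|hv|hv|hv|hv <;>
    rw [hv] at h2 <;> norm_num at h2 <;> omega

lemma final_arith (a b c d w M : ℤ) (hM : M = (a ^ 2 - b ^ 2) * ((c ^ 2 - d ^ 2)) * w ^ 2)
    (hac : a % 2 = c % 2) (hbd : b % 2 = d % 2) (hodd : Odd M) :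
    M % 8 = 1 ∨ M % 8 = 5 := by
  have hModd : M % 2 = 1 := Int.odd_iff.mp hodd
  have hw : Odd w := by
    rcases Int.even_or_odd w with he | ho
    · exfalso
      have : Even M := by
        rw [hM]
        have : Even (w ^ 2) := by rw [pow_two]; exact he.mul_right w
        exact this.mul_left _
      exact (Int.not_odd_iff_even.mpr this) hodd
    · exact ho
  have hwodd : w % 2 = 1 := Int.odd_iff.mp hw
  have hw2 : w ^ 2 % 8 = 1 := by
    rcases sq_mod8 w with ⟨_, h⟩ | ⟨h, _⟩ | ⟨h, _⟩ <;> omega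
  have hMm : M % 8 = ((a ^ 2 % 8 - b ^ 2 % 8) % 8 * ((c ^ 2 % 8 - d ^ 2 % 8) % 8) % 8
      * (w ^ 2 % 8)) % 8 := by
    rw [hM, Int.mul_emod, Int.mul_emod (a ^ 2 - b ^ 2), Int.sub_emod (a ^ 2),
      Int.sub_emod (c ^ 2)]
  rw [hw2] at hMm
  clear hM hodd hw hw2
  rcases sq_mod8 a with ⟨ha1, ha2⟩ | ⟨ha1, ha2⟩ | ⟨ha1, ha2⟩ <;>
  rcases sq_mod8 b with ⟨hb1, hb2⟩ | ⟨hb1, hb2⟩ | ⟨hb1, hb2⟩ <;>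
  rcases sq_mod8 c with ⟨hc1, hc2⟩ | ⟨hc1, hc2⟩ | ⟨hc1, hc2⟩ <;>
  rcases sq_mod8 d with ⟨hd1, hd2⟩ | ⟨hd1, hd2⟩ | ⟨hd1, hd2⟩ <;>
    rw [ha2, hb2, hc2, hd2] at hMm <;> norm_num at hMm <;> omega

theorem stmt12 (n : ℕ) (hn : 0 < n) (heven : Even n)
    (f g : Polynomial ℤ) (M : ℤ) (hM : (M : ℂ) = MQ n f g)
    (h : Odd M) : M % 8 = 1 ∨ M % 8 = 5 := by
  obtain ⟨b, hb⟩ := MQ_eq n hn heven f g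
  rw [hb] at hM
  have hMint : M = ((f.eval 1) ^ 2 - (g.eval 1) ^ 2) *
      ((f.eval (-1)) ^ 2 - (g.eval (-1)) ^ 2) * b ^ 2 := by
    exact_mod_cast hM
  have hfp : (2 : ℤ) ∣ f.eval 1 - f.eval (-1) := by
    have := Polynomial.sub_dvd_eval_sub 1 (-1) f
    norm_num at this
    exact this
  have hgp : (2 : ℤ) ∣ g.eval 1 - g.eval (-1) := by
    have := Polynomial.sub_dvd_eval_sub 1 (-1) g
    norm_num at this
    exact this
  exact final_arith (f.eval 1) (g.eval 1) (f.eval (-1)) (g.eval (-1)) b M hMint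
    (by omega) (by omega) h
end

section
/- Let p be an odd prime. With f(x) = 1 + x^2 and g(x) = (x-1)·Φ_p(x^2), one has M_{Q_{4p}}(f, g) = 2^5 · (p^2+1)/2 = 16(p^2+1). -/
open Polynomial Complex Finset


lemma prodA {p : ℕ} (hp0 : 0 < p) (hodd : Odd p) {ω : ℂ} (hω : IsPrimitiveRoot ω p) :
    ∏ j ∈ Finset.range p, (1 + ω ^ j) = 2 := by
  have h := X_pow_sub_C_eq_prod hω hp0 (one_pow p)
  have h2 := congrArg (Polynomial.eval (-1 : ℂ)) h
  simp only [eval_sub, eval_pow, eval_X, eval_C, eval_prod, mul_one] at h2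
  rw [hodd.neg_one_pow] at h2
  have : ∏ i ∈ Finset.range p, ((-1 : ℂ) - ω ^ i)
      = ∏ i ∈ Finset.range p, (-1 : ℂ) * (1 + ω ^ i) :=
    Finset.prod_congr rfl (fun i _ => by ring)
  rw [Finset.prod_mul_distrib, Finset.prod_const, Finset.card_range] at this
  rw [this, hodd.neg_one_pow] at h2
  linear_combination h2

lemma prodB {p : ℕ} (hp0 : 0 < p) (hodd : Odd p) {ω : ℂ} (hω : IsPrimitiveRoot ω p) :
    ∏ j ∈ ((Finset.range (2 * p)).erase 0).erase p, (1 + ω ^ j) = 1 := by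
  have hfull : ∏ j ∈ Finset.range (2 * p), (1 + ω ^ j) = 4 := by
    rw [two_mul, Finset.prod_range_add]
    have : ∀ i, ω ^ (p + i) = ω ^ i := fun i => by
      rw [pow_add, hω.pow_eq_one, one_mul]
    simp only [this]
    rw [prodA hp0 hodd hω]; norm_num
  have h0 : (0 : ℕ) ∈ Finset.range (2 * p) := by simp; omega
  have hpmem : p ∈ (Finset.range (2 * p)).erase 0 := by
    rw [Finset.mem_erase, Finset.mem_range]; exact ⟨hp0.ne', by omega⟩
  rw [← Finset.mul_prod_erase _ _ h0, ← Finset.mul_prod_erase _ _ hpmem,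
    hω.pow_eq_one] at hfull
  simp only [pow_zero] at hfull
  linear_combination hfull / 4


theorem stmt18 (p : ℕ) (hp : p.Prime) (hodd : Odd p) :
    MQ p (1 + Polynomial.X ^ 2)
        ((Polynomial.X - 1) * (Polynomial.cyclotomic p ℤ).comp (Polynomial.X ^ 2))
      = (16 * (p ^ 2 + 1) : ℂ) := by
  have hp0 : 0 < p := hp.pos
  have hpC : (p : ℂ) ≠ 0 := Nat.cast_ne_zero.2 hp0.ne'
  set ζ : ℂ := Complex.exp (2 * Real.pi * Complex.I / (2 * p)) with hζdef
  have hζ : IsPrimitiveRoot ζ (2 * p) := by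
    have h := Complex.isPrimitiveRoot_exp (2 * p) (by omega)
    convert h using 2
    push_cast
    ring
  have hexp : ∀ j : ℕ, Complex.exp (2 * Real.pi * Complex.I * j / (2 * p)) = ζ ^ j := by
    intro j
    rw [hζdef, ← Complex.exp_nat_mul]
    congr 1
    field_simp
  have hζne : ∀ j : ℕ, ζ ^ j ≠ 0 := fun j => pow_ne_zero _ (Complex.exp_ne_zero _)
  have hω : IsPrimitiveRoot (ζ ^ 2) p := hζ.pow (by omega) (mul_comm 2 p ▸ rfl)
  have hcy : ∀ z : ℂ, Polynomial.aeval z (Polynomial.cyclotomic p ℤ)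
      = Polynomial.eval z (Polynomial.cyclotomic p ℂ) := by
    intro z
    rw [← map_cyclotomic p (algebraMap ℤ ℂ), aeval_def, eval_map]
  have hζp : ζ ^ p = -1 := by
    rw [hζdef, ← Complex.exp_nat_mul]
    rw [show (p : ℂ) * (2 * Real.pi * Complex.I / (2 * p)) = Real.pi * Complex.I by
      field_simp]
    exact Complex.exp_pi_mul_I
  -- unfold and simplify the integrand
  rw [MQ]
  simp only [hexp, map_add, map_one, map_mul, map_sub, map_pow, aeval_X, Polynomial.aeval_comp,
    hcy]
  -- split off j = 0 and j = p
  have h0 : (0 : ℕ) ∈ Finset.range (2 * p) := by simp; omega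
  have hpmem : p ∈ (Finset.range (2 * p)).erase 0 := by
    rw [Finset.mem_erase, Finset.mem_range]; exact ⟨hp0.ne', by omega⟩
  rw [← Finset.mul_prod_erase _ _ h0, ← Finset.mul_prod_erase _ _ hpmem]
  have hrest : ∏ j ∈ ((Finset.range (2 * p)).erase 0).erase p,
      ((1 + (ζ ^ j) ^ 2) * (1 + ((ζ ^ j)⁻¹) ^ 2) -
        (ζ ^ j) ^ p * ((ζ ^ j - 1) * Polynomial.eval ((ζ ^ j) ^ 2) (Polynomial.cyclotomic p ℂ)) *
          (((ζ ^ j)⁻¹ - 1) *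
            Polynomial.eval (((ζ ^ j)⁻¹) ^ 2) (Polynomial.cyclotomic p ℂ))) = 1 := by
    have key : ∀ j ∈ ((Finset.range (2 * p)).erase 0).erase p,
        ((1 + (ζ ^ j) ^ 2) * (1 + ((ζ ^ j)⁻¹) ^ 2) -
          (ζ ^ j) ^ p * ((ζ ^ j - 1) * Polynomial.eval ((ζ ^ j) ^ 2) (Polynomial.cyclotomic p ℂ)) *
            (((ζ ^ j)⁻¹ - 1) *
              Polynomial.eval (((ζ ^ j)⁻¹) ^ 2) (Polynomial.cyclotomic p ℂ)))
        = (1 + (ζ ^ 2) ^ j) * (1 + ((ζ ^ 2)⁻¹) ^ j) := by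
      intro j hj
      rw [Finset.mem_erase, Finset.mem_erase, Finset.mem_range] at hj
      obtain ⟨hjp, hj0, hjlt⟩ := hj
      have hndvd : ¬ p ∣ j := by
        rintro ⟨c, rfl⟩
        rcases c with _ | _ | c
        · omega
        · omega
        · nlinarith
      have hprim : IsPrimitiveRoot ((ζ ^ 2) ^ j) p :=
        hω.pow_of_coprime j (hp.coprime_iff_not_dvd.2 hndvd).symm
      have hroot : Polynomial.eval ((ζ ^ 2) ^ j) (Polynomial.cyclotomic p ℂ) = 0 :=
        hprim.isRoot_cyclotomic hp0
      rw [show (ζ ^ j) ^ 2 = (ζ ^ 2) ^ j by ring, hroot]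
      rw [show ((ζ ^ j)⁻¹) ^ 2 = ((ζ ^ 2)⁻¹) ^ j by rw [← inv_pow, ← inv_pow]; ring]
      ring
    rw [Finset.prod_congr rfl key, Finset.prod_mul_distrib,
      prodB hp0 hodd hω, prodB hp0 hodd hω.inv, one_mul]
  rw [hrest]
  -- compute the two special terms
  have e0 : ζ ^ (0 : ℕ) = 1 := pow_zero ζ
  have hcy1 : Polynomial.eval (1 : ℂ) (Polynomial.cyclotomic p ℂ) = p := by
    haveI : Fact p.Prime := ⟨hp⟩
    exact_mod_cast Polynomial.eval_one_cyclotomic_prime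
  rw [e0]
  simp only [inv_one, one_pow, hζp]
  rw [show ((-1 : ℂ))⁻¹ = -1 by norm_num]
  rw [show ((-1 : ℂ)) ^ 2 = 1 by norm_num, hcy1]
  rw [hodd.neg_one_pow]
  ring
end

section
/- Let p be a prime with p ≡ 1 mod 4 and let A, B be integers with A^2 + B^2 = 2p. With f(x) = (1+x) + A·(x^p - 1)·Φ_p(x^2) and g(x) = B·(x^p - 1)·Φ_p(x^2), one has M_{Q_{4p}}(f, g) = 2^5 · p^5. -/
open Polynomial Complex Finset

lemma prim_eval (p : ℕ) {w : ℂ} (hw : IsPrimitiveRoot w p) (c : ℂ) :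
    ∏ μ ∈ primitiveRoots p ℂ, (c - μ) = eval c (cyclotomic p ℂ) := by
  rw [cyclotomic_eq_prod_X_sub_primitiveRoots hw, eval_prod]
  simp

lemma prim_card (p : ℕ) (hp : p.Prime) {w : ℂ} (hw : IsPrimitiveRoot w p) :
    (primitiveRoots p ℂ).card = p - 1 := by
  rw [hw.card_primitiveRoots, Nat.totient_prime hp]

lemma neg_prod (s : Finset ℂ) (f : ℂ → ℂ) :
    ∏ μ ∈ s, (-(f μ)) = (-1) ^ s.card * ∏ μ ∈ s, f μ := by
  rw [← Finset.prod_const, ← Finset.prod_mul_distrib]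
  simp

lemma prim_prod_self (p : ℕ) (hp : p.Prime) (hev : Even (p - 1)) {w : ℂ}
    (hw : IsPrimitiveRoot w p) : ∏ μ ∈ primitiveRoots p ℂ, μ = 1 := by
  have h := prim_eval p hw 0
  rw [← coeff_zero_eq_eval_zero, cyclotomic_coeff_zero ℂ hp.one_lt] at h
  simp only [zero_sub] at h
  rwa [neg_prod, prim_card p hp hw, hev.neg_one_pow, one_mul] at h

lemma prim_prod_one_add (p : ℕ) (hp : p.Prime) (hodd : Odd p) (hev : Even (p - 1)) {w : ℂ}
    (hw : IsPrimitiveRoot w p) : ∏ μ ∈ primitiveRoots p ℂ, (1 + μ) = 1 := by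
  haveI := Fact.mk hp
  have h := prim_eval p hw (-1)
  have h2 : eval (-1) (cyclotomic p ℂ) = 1 := by
    rw [cyclotomic_prime, eval_finset_sum]
    simp [Nat.not_even_iff_odd.2 hodd]
  rw [h2] at h
  have h3 : ∀ μ : ℂ, (-1 : ℂ) - μ = -(1 + μ) := by intro μ; ring
  simp only [h3] at h
  rwa [neg_prod, prim_card p hp hw, hev.neg_one_pow, one_mul] at h

lemma prim_prod_one_sub (p : ℕ) (hp : p.Prime) {w : ℂ}
    (hw : IsPrimitiveRoot w p) : ∏ μ ∈ primitiveRoots p ℂ, (1 - μ) = (p : ℂ) := by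
  haveI := Fact.mk hp
  have h := prim_eval p hw 1
  rwa [eval_one_cyclotomic_prime] at h

lemma prim_pair_add (p : ℕ) (hp : p.Prime) (hodd : Odd p) (hev : Even (p - 1)) {w : ℂ}
    (hw : IsPrimitiveRoot w p) :
    ∏ μ ∈ primitiveRoots p ℂ, ((1 + μ) * (1 + μ⁻¹)) = 1 := by
  have hne : ∀ μ ∈ primitiveRoots p ℂ, (μ : ℂ) ≠ 0 := fun μ hμ =>
    (isPrimitiveRoot_of_mem_primitiveRoots hμ).ne_zero hp.pos.ne'
  have : ∏ μ ∈ primitiveRoots p ℂ, ((1 + μ) * (1 + μ⁻¹))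
      = ∏ μ ∈ primitiveRoots p ℂ, ((1 + μ) * (1 + μ) * μ⁻¹) := by
    refine Finset.prod_congr rfl fun μ hμ => ?_
    have h0 := hne μ hμ
    have h1 : (1:ℂ) + μ⁻¹ = (1 + μ) * μ⁻¹ := by
      rw [add_mul, one_mul, mul_inv_cancel₀ h0, add_comm]
    rw [h1]; ring
  rw [this, Finset.prod_mul_distrib, Finset.prod_mul_distrib, Finset.prod_inv_distrib,
    prim_prod_one_add p hp hodd hev hw, prim_prod_self p hp hev hw]
  norm_num

lemma prim_pair_sub (p : ℕ) (hp : p.Prime) (hev : Even (p - 1)) {w : ℂ}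
    (hw : IsPrimitiveRoot w p) :
    ∏ ν ∈ primitiveRoots p ℂ, ((1 - ν) * (1 - ν⁻¹)) = (p : ℂ) ^ 2 := by
  have hne : ∀ μ ∈ primitiveRoots p ℂ, (μ : ℂ) ≠ 0 := fun μ hμ =>
    (isPrimitiveRoot_of_mem_primitiveRoots hμ).ne_zero hp.pos.ne'
  have : ∏ ν ∈ primitiveRoots p ℂ, ((1 - ν) * (1 - ν⁻¹))
      = ∏ ν ∈ primitiveRoots p ℂ, (-((1 - ν) * (1 - ν) * ν⁻¹)) := by
    refine Finset.prod_congr rfl fun μ hμ => ?_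
    have h0 := hne μ hμ
    have h1 : (1:ℂ) - μ⁻¹ = -((1 - μ) * μ⁻¹) := by
      rw [sub_mul, one_mul, mul_inv_cancel₀ h0]; ring
    rw [h1]; ring
  rw [this, neg_prod, Finset.prod_mul_distrib, Finset.prod_mul_distrib, Finset.prod_inv_distrib,
    prim_prod_one_sub p hp hw, prim_prod_self p hp hev hw, prim_card p hp hw, hev.neg_one_pow]
  norm_num
  ring

lemma neg_prim_p {p : ℕ} (hp : p.Prime) (hodd : Odd p) {μ : ℂ}
    (hμ : IsPrimitiveRoot μ (2 * p)) : IsPrimitiveRoot (-μ) p := by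
  have hpos : 0 < 2 * p := by have := hp.pos; omega
  have hsq : IsPrimitiveRoot (μ ^ 2) p := hμ.pow hpos (by ring)
  have hμp : μ ^ p = -1 := by
    have h1 : μ ^ p * μ ^ p = 1 := by
      rw [← pow_add]
      have : p + p = 2 * p := by ring
      rw [this, hμ.pow_eq_one]
    have h2 : μ ^ p ≠ 1 := hμ.pow_ne_one_of_pos_of_lt hp.ne_zero (by omega)
    rcases mul_self_eq_one_iff.mp h1 with h | h
    · exact absurd h h2
    · exact h
  have hneg : -μ = (μ ^ 2) ^ ((p + 1) / 2) := by
    rw [← pow_mul]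
    have : 2 * ((p + 1) / 2) = p + 1 := by
      obtain ⟨k, hk⟩ := hodd; omega
    rw [this, pow_succ, hμp, neg_one_mul]
  rw [hneg]
  refine hsq.pow_of_coprime _ ?_
  have : ¬ p ∣ (p + 1) / 2 := by
    intro h
    have h1 : 0 < (p + 1) / 2 := by omega
    have h2 : (p + 1) / 2 < p := by
      have := hp.two_le; omega
    exact absurd (Nat.le_of_dvd h1 h) (by omega)
  exact (hp.coprime_iff_not_dvd.mpr this).symm

lemma neg_prim_2p {p : ℕ} (hp : p.Prime) (hodd : Odd p) {ν : ℂ}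
    (hν : IsPrimitiveRoot ν p) : IsPrimitiveRoot (-ν) (2 * p) := by
  have h1 : orderOf (-1 : ℂ) = 2 := by
    rw [orderOf_neg_one, ringChar.eq_zero]
    norm_num
  have h2 : orderOf ν = p := hν.eq_orderOf.symm
  have hco : (orderOf (-1 : ℂ)).Coprime (orderOf ν) := by
    rw [h1, h2]
    exact (Nat.prime_two.coprime_iff_not_dvd).mpr (by
      intro h; exact (Nat.not_even_iff_odd.mpr hodd) ((even_iff_two_dvd).mpr h))
  have h3 : orderOf ((-1 : ℂ) * ν) = 2 * p := by
    rw [(Commute.all _ _).orderOf_mul_eq_mul_orderOf_of_coprime hco, h1, h2]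
  have h4 : IsPrimitiveRoot ((-1 : ℂ) * ν) (orderOf ((-1 : ℂ) * ν)) :=
    IsPrimitiveRoot.orderOf _
  rw [h3, neg_one_mul] at h4
  exact h4

lemma prim_two_mul (p : ℕ) (hp : p.Prime) (hodd : Odd p) :
    ∏ μ ∈ primitiveRoots (2 * p) ℂ, ((1 + μ) * (1 + μ⁻¹))
      = ∏ ν ∈ primitiveRoots p ℂ, ((1 - ν) * (1 - ν⁻¹)) := by
  have hpos : 0 < 2 * p := by have := hp.pos; omega
  refine Finset.prod_nbij' (fun μ => -μ) (fun ν => -ν) ?_ ?_ ?_ ?_ ?_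
  · intro μ hμ
    exact (mem_primitiveRoots hp.pos).mpr
      (neg_prim_p hp hodd (isPrimitiveRoot_of_mem_primitiveRoots hμ))
  · intro ν hν
    exact (mem_primitiveRoots hpos).mpr
      (neg_prim_2p hp hodd (isPrimitiveRoot_of_mem_primitiveRoots hν))
  · intro a _; exact neg_neg a
  · intro a _; exact neg_neg a
  · intro μ _
    rw [inv_neg]
    ring

lemma zeta_pow_p {p : ℕ} (hp : 0 < p) {ζ : ℂ} (hζ : IsPrimitiveRoot ζ (2 * p)) :
    ζ ^ p = -1 := by
  have h1 : ζ ^ p * ζ ^ p = 1 := by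
    rw [← pow_add]
    have : p + p = 2 * p := by ring
    rw [this, hζ.pow_eq_one]
  have h2 : ζ ^ p ≠ 1 := hζ.pow_ne_one_of_pos_of_lt hp.ne' (by omega)
  rcases mul_self_eq_one_iff.mp h1 with h | h
  · exact absurd h h2
  · exact h

lemma T_prod (p : ℕ) (hp : p.Prime) (hodd : Odd p) (hev : Even (p - 1)) {ζ : ℂ}
    (hζ : IsPrimitiveRoot ζ (2 * p)) :
    ∏ j ∈ ((Finset.range (2 * p)).erase 0).erase p, ((1 + ζ ^ j) * (1 + (ζ ^ j)⁻¹))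
      = (p : ℂ) ^ 2 := by
  have hpos : 0 < 2 * p := by have := hp.pos; omega
  have hp3 : 3 ≤ p := by
    have h2 := hp.two_le
    have : p ≠ 2 := by rintro rfl; exact absurd hodd (by decide)
    omega
  have hw : IsPrimitiveRoot (ζ ^ 2) p := hζ.pow hpos (by ring)
  have hdisj : Disjoint (primitiveRoots p ℂ) (primitiveRoots (2 * p) ℂ) := by
    rw [Finset.disjoint_left]
    intro μ h1 h2
    have := (isPrimitiveRoot_of_mem_primitiveRoots h1).unique
      (isPrimitiveRoot_of_mem_primitiveRoots h2)
    omega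
  have hbij : ∏ j ∈ ((Finset.range (2 * p)).erase 0).erase p,
      ((1 + ζ ^ j) * (1 + (ζ ^ j)⁻¹))
      = ∏ μ ∈ primitiveRoots p ℂ ∪ primitiveRoots (2 * p) ℂ, ((1 + μ) * (1 + μ⁻¹)) := by
    refine Finset.prod_bij (fun j _ => ζ ^ j) ?_ ?_ ?_ ?_
    · intro j hj
      show ζ ^ j ∈ _
      simp only [Finset.mem_erase, Finset.mem_range] at hj
      obtain ⟨hjp, hj0, hjlt⟩ := hj
      rcases Nat.even_or_odd j with he | ho
      · obtain ⟨k, hk⟩ := he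
        have hk0 : k ≠ 0 := by omega
        have hklt : k < p := by omega
        have hcop : Nat.Coprime k p := by
          refine (hp.coprime_iff_not_dvd.mpr ?_).symm
          intro h
          exact absurd (Nat.le_of_dvd (by omega) h) (by omega)
        have : ζ ^ j = (ζ ^ 2) ^ k := by rw [← pow_mul]; congr 1; omega
        rw [this]
        exact Finset.mem_union_left _
          ((mem_primitiveRoots hp.pos).mpr (hw.pow_of_coprime k hcop))
      · have hcop : Nat.Coprime j (2 * p) := by
          refine Nat.Coprime.mul_right ?_ ?_
          · rcases ho with ⟨k, hk⟩
            simpa [hk] using Nat.coprime_two_right_iff_odd.mpr ho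
          · refine (hp.coprime_iff_not_dvd.mpr ?_).symm
            intro h
            obtain ⟨k, hk⟩ := h
            have hk2 : k < 2 := by
              by_contra hge
              push_neg at hge
              have : 2 * p ≤ p * k := by nlinarith [hp.pos]
              omega
            interval_cases k <;> omega
        exact Finset.mem_union_right _
          ((mem_primitiveRoots hpos).mpr (hζ.pow_of_coprime j hcop))
    · intro a ha b hb hab
      simp only [Finset.mem_erase, Finset.mem_range] at ha hb
      exact hζ.pow_inj ha.2.2 hb.2.2 hab
    · intro μ hμ
      haveI : NeZero (2 * p) := ⟨by omega⟩
      have hone : μ ^ (2 * p) = 1 := by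
        rcases Finset.mem_union.mp hμ with h | h
        · have := (isPrimitiveRoot_of_mem_primitiveRoots h).pow_eq_one
          rw [mul_comm, pow_mul, this, one_pow]
        · exact (isPrimitiveRoot_of_mem_primitiveRoots h).pow_eq_one
      obtain ⟨i, hilt, hieq⟩ := hζ.eq_pow_of_pow_eq_one hone
      refine ⟨i, ?_, hieq⟩
      simp only [Finset.mem_erase, Finset.mem_range]
      refine ⟨?_, ?_, hilt⟩
      · rintro rfl
        rw [zeta_pow_p hp.pos hζ] at hieq
        rcases Finset.mem_union.mp hμ with h | h
        all_goals {
          have hdvd := (isPrimitiveRoot_of_mem_primitiveRoots h).dvd_of_pow_eq_one 2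
            (by rw [← hieq]; norm_num)
          have := Nat.le_of_dvd (by norm_num) hdvd
          omega }
      · rintro rfl
        simp only [pow_zero] at hieq
        rcases Finset.mem_union.mp hμ with h | h
        all_goals {
          have h1 := isPrimitiveRoot_of_mem_primitiveRoots h
          rw [← hieq] at h1
          have := h1.unique IsPrimitiveRoot.one
          omega }
    · intro j _; rfl
  rw [hbij, Finset.prod_union hdisj, prim_pair_add p hp hodd hev hw,
    prim_two_mul p hp hodd, prim_pair_sub p hp hev hw, one_mul]

theorem stmt19 (p : ℕ) (hp : p.Prime) (hp1 : p % 4 = 1)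
    (A B : ℤ) (hAB : A ^ 2 + B ^ 2 = 2 * p) :
    MQ p ((1 + Polynomial.X) +
          Polynomial.C A * (Polynomial.X ^ p - 1) * (Polynomial.cyclotomic p ℤ).comp (Polynomial.X ^ 2))
        (Polynomial.C B * (Polynomial.X ^ p - 1) * (Polynomial.cyclotomic p ℤ).comp (Polynomial.X ^ 2))
      = (2 ^ 5 * p ^ 5 : ℂ) := by
  haveI := Fact.mk hp
  have hp2 : p ≠ 2 := by omega
  have hodd : Odd p := hp.odd_of_ne_two hp2
  have hp3 : 3 ≤ p := by have := hp.two_le; omega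
  have hev : Even (p - 1) := by rw [Nat.even_iff]; omega
  have hpos : 0 < 2 * p := by omega
  set ζ : ℂ := Complex.exp (2 * Real.pi * Complex.I / (2 * p)) with hζdef
  have hζ : IsPrimitiveRoot ζ (2 * p) := by
    have h := Complex.isPrimitiveRoot_exp (2 * p) (by omega)
    have hcast : ((2 * p : ℕ) : ℂ) = 2 * (p : ℂ) := by push_cast; ring
    rwa [hcast] at h
  have hw : IsPrimitiveRoot (ζ ^ 2) p := hζ.pow hpos (by ring)
  have hexp : ∀ j : ℕ, Complex.exp (2 * Real.pi * Complex.I * j / (2 * p)) = ζ ^ j := by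
    intro j
    rw [hζdef, ← Complex.exp_nat_mul]
    congr 1
    ring
  have hgeom : ∀ w : ℂ, w ^ p = 1 → w ≠ 1 → ∑ i ∈ Finset.range p, w ^ i = 0 := by
    intro w h1 h2
    have h3 := geom_sum_mul w p
    rw [h1, sub_self] at h3
    rcases mul_eq_zero.mp h3 with h | h
    · exact h
    · exact absurd (sub_eq_zero.mp h) h2
  have hf : ∀ z : ℂ, (Polynomial.aeval z) ((1 + Polynomial.X) +
        Polynomial.C A * (Polynomial.X ^ p - 1) * (Polynomial.cyclotomic p ℤ).comp (Polynomial.X ^ 2))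
      = (1 + z) + (A : ℂ) * (z ^ p - 1) * ∑ i ∈ Finset.range p, (z ^ 2) ^ i := by
    intro z
    rw [Polynomial.cyclotomic_prime]
    simp [Polynomial.aeval_comp]
  have hg : ∀ z : ℂ, (Polynomial.aeval z)
        (Polynomial.C B * (Polynomial.X ^ p - 1) * (Polynomial.cyclotomic p ℤ).comp (Polynomial.X ^ 2))
      = (B : ℂ) * (z ^ p - 1) * ∑ i ∈ Finset.range p, (z ^ 2) ^ i := by
    intro z
    rw [Polynomial.cyclotomic_prime]
    simp [Polynomial.aeval_comp]
  simp only [MQ, hexp]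
  have h0mem : 0 ∈ Finset.range (2 * p) := Finset.mem_range.mpr hpos
  have hpmem : p ∈ (Finset.range (2 * p)).erase 0 := by
    simp only [Finset.mem_erase, Finset.mem_range]
    omega
  rw [← Finset.mul_prod_erase _ _ h0mem, ← Finset.mul_prod_erase _ _ hpmem]
  have hTcongr : ∀ j ∈ ((Finset.range (2 * p)).erase 0).erase p,
      ((Polynomial.aeval (ζ ^ j)) ((1 + Polynomial.X) +
          Polynomial.C A * (Polynomial.X ^ p - 1) * (Polynomial.cyclotomic p ℤ).comp (Polynomial.X ^ 2)) *
        (Polynomial.aeval (ζ ^ j)⁻¹) ((1 + Polynomial.X) +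
          Polynomial.C A * (Polynomial.X ^ p - 1) * (Polynomial.cyclotomic p ℤ).comp (Polynomial.X ^ 2)) -
        (ζ ^ j) ^ p *
          (Polynomial.aeval (ζ ^ j)) (Polynomial.C B * (Polynomial.X ^ p - 1) *
            (Polynomial.cyclotomic p ℤ).comp (Polynomial.X ^ 2)) *
          (Polynomial.aeval (ζ ^ j)⁻¹) (Polynomial.C B * (Polynomial.X ^ p - 1) *
            (Polynomial.cyclotomic p ℤ).comp (Polynomial.X ^ 2)))
      = (1 + ζ ^ j) * (1 + (ζ ^ j)⁻¹) := by
    intro j hj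
    simp only [Finset.mem_erase, Finset.mem_range] at hj
    obtain ⟨hjp, hj0, hjlt⟩ := hj
    have hpj : ¬ p ∣ j := by
      rintro ⟨c, hc⟩
      have hc2 : c < 2 := by
        by_contra hge
        push_neg at hge
        have : 2 * p ≤ p * c := by nlinarith
        omega
      interval_cases c <;> omega
    have hz2 : (ζ ^ j) ^ 2 = (ζ ^ 2) ^ j := by rw [← pow_mul, ← pow_mul, mul_comm]
    have hz2ne : (ζ ^ j) ^ 2 ≠ 1 := by
      rw [hz2]
      intro h
      exact hpj (hw.dvd_of_pow_eq_one j h)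
    have hz2pow : ((ζ ^ j) ^ 2) ^ p = 1 := by
      rw [hz2, ← pow_mul, mul_comm j p, pow_mul, hw.pow_eq_one, one_pow]
    have hS : ∑ i ∈ Finset.range p, ((ζ ^ j) ^ 2) ^ i = 0 := hgeom _ hz2pow hz2ne
    have hzinv2 : ((ζ ^ j)⁻¹) ^ 2 = ((ζ ^ j) ^ 2)⁻¹ := by rw [inv_pow]
    have hS' : ∑ i ∈ Finset.range p, (((ζ ^ j)⁻¹) ^ 2) ^ i = 0 := by
      refine hgeom _ ?_ ?_
      · rw [hzinv2, inv_pow, hz2pow, inv_one]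
      · rw [hzinv2]
        intro h
        exact hz2ne (by rwa [inv_eq_one] at h)
    rw [hf, hf, hg, hg, hS, hS']
    ring
  rw [Finset.prod_congr rfl hTcongr, T_prod p hp hodd hev hζ]
  have hz0 : ζ ^ 0 = 1 := pow_zero ζ
  have hzp : ζ ^ p = -1 := zeta_pow_p hp.pos hζ
  rw [hz0, hzp]
  have hSone : ∑ i ∈ Finset.range p, ((1 : ℂ) ^ 2) ^ i = p := by simp
  have hSnegone : ∑ i ∈ Finset.range p, (((-1) : ℂ) ^ 2) ^ i = p := by simp
  have hnp : ((-1 : ℂ)) ^ p = -1 := Odd.neg_one_pow hodd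
  rw [inv_one, inv_neg, inv_one]
  rw [hf, hf, hg, hg, hSone, hSnegone, hnp, one_pow]
  have hABC : (A : ℂ) ^ 2 + (B : ℂ) ^ 2 = 2 * (p : ℂ) := by exact_mod_cast hAB
  ring_nf
  linear_combination (16 * (p : ℂ) ^ 4) * hABC
end
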